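/- arXiv:1409.8452 — 9 statements merged into one kernel-verified Lean document; each statement's English description precedes it below -/
import Mathlib

section
/- A subset of ℕ is piecewise syndetic if and only if it is the intersection of a thick set and a syndetic set, where a set is piecewise syndetic when there exists N ∈ ℕ such that the set contains arbitrarily long runs of the form: every block of N consecutive integers within arbitrarily long intervals meets the set. -/
/-- A set of natural numbers is thick if it contains arbitrarily long runs of
consecutive integers. -/
def Thick (F : Set ℕ) : Prop := ∀ n : ℕ, ∃ k : ℕ, ∀ i ≤ n, k + i ∈ F

/-- A set of natural numbers is syndetic if there is `N` such that every
interval of `N + 1` consecutive integers meets it. -/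
def Syndetic (F : Set ℕ) : Prop := ∃ N : ℕ, ∀ i : ℕ, ∃ j, i ≤ j ∧ j ≤ i + N ∧ j ∈ F

/-- A set is piecewise syndetic if for some `N`, there are arbitrarily long
intervals `I` such that every block of `N + 1` consecutive integers inside `I`
meets the set. -/
def PiecewiseSyndetic (F : Set ℕ) : Prop :=
  ∃ N : ℕ, ∀ m : ℕ, ∃ a L : ℕ, m ≤ L ∧
    ∀ i : ℕ, a ≤ i → i + N ≤ a + L → ∃ j, i ≤ j ∧ j ≤ i + N ∧ j ∈ F

/-- A set is piecewise syndetic iff it is the intersection of a thick set and a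
syndetic set. -/
theorem stmt4 (F : Set ℕ) :
    PiecewiseSyndetic F ↔ ∃ A B : Set ℕ, Thick A ∧ Syndetic B ∧ F = A ∩ B := by
  constructor
  · rintro ⟨N, h⟩
    have key : ∀ m t : ℕ, ∃ a L : ℕ, m ≤ L ∧ t ≤ a ∧
        ∀ i : ℕ, a ≤ i → i + N ≤ a + L → ∃ j, i ≤ j ∧ j ≤ i + N ∧ j ∈ F := by
      intro m t
      obtain ⟨a, L, hL, hP⟩ := h (t + m)
      refine ⟨max a t, a + L - max a t, ?_, le_max_right _ _, ?_⟩
      · rcases le_total t a with h1 | h1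
        · rw [max_eq_left h1]; omega
        · rw [max_eq_right h1]; omega
      · intro i hi hiN
        have h2 : max a t ≤ a + L := by
          rcases le_total t a with h1 | h1
          · rw [max_eq_left h1]; omega
          · rw [max_eq_right h1]; omega
        exact hP i (le_trans (le_max_left a t) hi) (by omega)
    choose af Lf hLf haf hPf using key
    let g : ℕ → ℕ := fun m => Nat.rec 0 (fun m t => af m t + Lf m t + 2) m
    set a : ℕ → ℕ := fun m => af m (g m) with ha
    set L : ℕ → ℕ := fun m => Lf m (g m) with hLdef
    have hg : ∀ m, g (m + 1) = a m + L m + 2 := fun m => rfl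
    have hmono : ∀ m, a m + L m + 2 ≤ a (m + 1) := by
      intro m
      have := haf (m + 1) (g (m + 1))
      rw [hg m] at this
      exact this
    have hL : ∀ m, m ≤ L m := fun m => hLf m (g m)
    have hP : ∀ m, ∀ i : ℕ, a m ≤ i → i + N ≤ a m + L m →
        ∃ j, i ≤ j ∧ j ≤ i + N ∧ j ∈ F := fun m => hPf m (g m)
    set I : Set ℕ := ⋃ m, Set.Icc (a m) (a m + L m) with hI
    refine ⟨F ∪ I, F ∪ Iᶜ, ?_, ?_, ?_⟩
    · intro n
      refine ⟨a n, fun i hi => Or.inr ?_⟩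
      exact Set.mem_iUnion.2 ⟨n, Set.mem_Icc.2 ⟨by omega, by have := hL n; omega⟩⟩
    · refine ⟨N, fun i => ?_⟩
      by_cases hall : ∀ j, i ≤ j → j ≤ i + N → j ∈ I
      · obtain ⟨m, hm⟩ := Set.mem_iUnion.1 (hall i le_rfl (by omega))
        have hstep : ∀ p q, p < q → a p + L p + 2 ≤ a q := by
          intro p q hpq
          induction q with
          | zero => omega
          | succ q ih =>
            rcases Nat.lt_succ_iff_lt_or_eq.1 hpq with h1 | h1
            · have h2 := hmono q; have h3 := ih h1; omega
            · subst h1; exact hmono p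
        have hnot : a m + L m + 1 ∉ I := by
          intro hmem
          obtain ⟨m', hm'⟩ := Set.mem_iUnion.1 hmem
          simp only [Set.mem_Icc] at hm'
          rcases lt_trichotomy m' m with h1 | h1 | h1
          · have := hstep m' m h1; omega
          · subst h1; omega
          · have := hstep m m' h1; omega
        simp only [Set.mem_Icc] at hm
        have hend : i + N ≤ a m + L m := by
          by_contra hcon
          exact hnot (hall (a m + L m + 1) (by omega) (by omega))
        obtain ⟨j, hj1, hj2, hj3⟩ := hP m i hm.1 hend
        exact ⟨j, hj1, hj2, Or.inl hj3⟩
      · push_neg at hall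
        obtain ⟨j, hj1, hj2, hj3⟩ := hall
        exact ⟨j, hj1, hj2, Or.inr hj3⟩
    · ext x
      constructor
      · intro hx; exact ⟨Or.inl hx, Or.inl hx⟩
      · rintro ⟨hx1, hx2⟩
        rcases hx1 with h1 | h1
        · exact h1
        · rcases hx2 with h2 | h2
          · exact h2
          · exact absurd h1 h2
  · rintro ⟨A, B, hA, ⟨N, hB⟩, rfl⟩
    refine ⟨N, fun m => ?_⟩
    obtain ⟨k, hk⟩ := hA (m + N)
    refine ⟨k, m + N, by omega, fun i hi hiN => ?_⟩
    obtain ⟨j, hj1, hj2, hj3⟩ := hB i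
    refine ⟨j, hj1, hj2, ?_, hj3⟩
    have hjk : j = k + (j - k) := by omega
    rw [hjk]
    exact hk (j - k) (by omega)
end

section
/- A point x in a compact metric dynamical system (X,T) is a recurrent point (i.e., there is an increasing sequence of positive integers kₙ with T^{kₙ}(x) → x) if and only if for every open neighborhood U of x, the entering time set N(x,U) = {n ∈ ℕ : T^n(x) ∈ U} contains an IP-set. -/
/-- Auxiliary recursively defined shrinking neighborhoods for the IP construction. -/
noncomputable def stmt7W {X : Type*} (T : X → X) (f : Set X → ℕ) (U : Set X) : ℕ → Set X
  | 0 => U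
  | n + 1 => stmt7W T f U n ∩ (fun y => T^[f (stmt7W T f U n)] y) ⁻¹' stmt7W T f U n

/-- A point `x` of a compact metric dynamical system `(X, T)` is recurrent
(there is an increasing sequence `kₙ` of positive integers with `T^[kₙ] x → x`)
iff for every open neighborhood `U` of `x` the entering time set
`N(x, U) = {n > 0 : T^[n] x ∈ U}` contains an IP-set. -/
theorem stmt7 {X : Type*} [MetricSpace X] [CompactSpace X] (T : X ≃ₜ X) (x : X) :
    (∃ k : ℕ → ℕ, StrictMono k ∧ (∀ n, 0 < k n) ∧
      Filter.Tendsto (fun n => (⇑T)^[k n] x) Filter.atTop (nhds x)) ↔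
    (∀ U : Set X, IsOpen U → x ∈ U →
      ∃ p : ℕ → ℕ, (∀ i, 0 < p i) ∧
        ∀ s : Finset ℕ, s.Nonempty →
          (∑ i ∈ s, p i) ∈ {n : ℕ | 0 < n ∧ (⇑T)^[n] x ∈ U}) := by
  constructor
  · rintro ⟨k, hk, hkpos, hconv⟩ U hU hxU
    have key : ∀ V : Set X, IsOpen V → x ∈ V → ∃ n, 0 < n ∧ (⇑T)^[n] x ∈ V := by
      intro V hV hxV
      obtain ⟨N, hN⟩ := (hconv.eventually (hV.mem_nhds hxV)).exists
      exact ⟨k N, hkpos N, hN⟩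
    have key' : ∀ V : Set X, ∃ n, (IsOpen V ∧ x ∈ V) → 0 < n ∧ (⇑T)^[n] x ∈ V := by
      intro V
      by_cases h : IsOpen V ∧ x ∈ V
      · obtain ⟨n, hn⟩ := key V h.1 h.2
        exact ⟨n, fun _ => hn⟩
      · exact ⟨1, fun h' => absurd h' h⟩
    choose f hf using key'
    set W : ℕ → Set X := stmt7W (⇑T) f U with hWdef
    set p : ℕ → ℕ := fun n => f (W n) with hpdef
    have hWsucc : ∀ n, W (n + 1) = W n ∩ (fun y => (⇑T)^[p n] y) ⁻¹' W n := by
      intro n; rfl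
    have hinv : ∀ n, IsOpen (W n) ∧ x ∈ W n := by
      intro n
      induction n with
      | zero => exact ⟨hU, hxU⟩
      | succ n ih =>
        rw [hWsucc]
        refine ⟨ih.1.inter (ih.1.preimage (T.continuous.iterate _)), ih.2, ?_⟩
        exact (hf (W n) ih).2
    have hpos : ∀ n, 0 < p n := fun n => (hf (W n) (hinv n)).1
    have hmem : ∀ n, (⇑T)^[p n] x ∈ W n := fun n => (hf (W n) (hinv n)).2
    have hsub : ∀ n, W (n + 1) ⊆ W n := by
      intro n; rw [hWsucc]; exact Set.inter_subset_left
    have hmono : ∀ m n, m ≤ n → W n ⊆ W m := by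
      intro m n hmn
      induction hmn with
      | refl => exact subset_rfl
      | step _ ih => exact (hsub _).trans ih
    have hstep : ∀ n, ∀ y ∈ W (n + 1), (⇑T)^[p n] y ∈ W n := by
      intro n y hy
      rw [hWsucc] at hy
      exact hy.2
    have main : ∀ N (s : Finset ℕ) (hs : s.Nonempty), s.card = N + 1 →
        (⇑T)^[∑ i ∈ s, p i] x ∈ W (s.min' hs) := by
      intro N
      induction N with
      | zero =>
        intro s hs hcard
        obtain ⟨a, rfl⟩ := Finset.card_eq_one.mp hcard
        simpa using hmem a
      | succ N ih =>
        intro s hs hcard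
        have hm : s.min' hs ∈ s := s.min'_mem hs
        have hs' : (s.erase (s.min' hs)).Nonempty := by
          rw [← Finset.card_pos, Finset.card_erase_of_mem hm, hcard]
          omega
        have hmin' : s.min' hs + 1 ≤ (s.erase (s.min' hs)).min' hs' := by
          have h1 := Finset.min'_mem (s.erase (s.min' hs)) hs'
          have h2 : (s.erase (s.min' hs)).min' hs' ≠ s.min' hs :=
            Finset.ne_of_mem_erase h1
          have h3 : s.min' hs ≤ (s.erase (s.min' hs)).min' hs' :=
            Finset.min'_le s _ (Finset.mem_of_mem_erase h1)
          omega
        have hsum : ∑ i ∈ s, p i = p (s.min' hs) + ∑ i ∈ s.erase (s.min' hs), p i :=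
          (Finset.add_sum_erase s p hm).symm
        have hcard' : (s.erase (s.min' hs)).card = N + 1 := by
          rw [Finset.card_erase_of_mem hm, hcard]
          omega
        have hIH := ih (s.erase (s.min' hs)) hs' hcard'
        rw [hsum, Function.iterate_add_apply]
        exact hstep _ _ (hmono _ _ hmin' hIH)
    refine ⟨p, hpos, fun s hs => ?_⟩
    have hcard : s.card = (s.card - 1) + 1 := by
      have := Finset.card_pos.mpr hs
      omega
    refine ⟨Finset.sum_pos (fun i _ => hpos i) hs, ?_⟩
    have := main (s.card - 1) s hs hcard
    exact hmono 0 (s.min' hs) (Nat.zero_le _) this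
  · intro h
    have key : ∀ n N : ℕ, ∃ m, N < m ∧ (⇑T)^[m] x ∈ Metric.ball x (1 / (n + 1)) := by
      intro n N
      obtain ⟨p, hp, hps⟩ := h (Metric.ball x (1 / (n + 1))) Metric.isOpen_ball
        (Metric.mem_ball_self (by positivity))
      refine ⟨∑ i ∈ Finset.range (N + 1), p i, ?_,
        (hps _ (by simp)).2⟩
      calc N < N + 1 := Nat.lt_succ_self N
        _ = ∑ _i ∈ Finset.range (N + 1), 1 := by simp
        _ ≤ ∑ i ∈ Finset.range (N + 1), p i := Finset.sum_le_sum fun i _ => hp i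
    choose g hg1 hg2 using key
    set k : ℕ → ℕ := fun n => Nat.rec (g 0 0) (fun n kn => g (n + 1) kn) n with hkdef
    have hk0 : k 0 = g 0 0 := rfl
    have hkS : ∀ n, k (n + 1) = g (n + 1) (k n) := fun n => rfl
    have hmono : StrictMono k := by
      apply strictMono_nat_of_lt_succ
      intro n
      rw [hkS]
      exact hg1 (n + 1) (k n)
    have hkpos : ∀ n, 0 < k n := by
      intro n
      have h0 : 0 < k 0 := by rw [hk0]; exact hg1 0 0
      exact h0.trans_le (hmono.monotone (Nat.zero_le n))
    have hdist : ∀ n, dist ((⇑T)^[k n] x) x < 1 / (n + 1) := by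
      intro n
      cases n with
      | zero =>
        have := hg2 0 0
        rw [← hk0] at this
        simpa [Metric.mem_ball] using this
      | succ n =>
        have := hg2 (n + 1) (k n)
        rw [← hkS] at this
        simpa [Metric.mem_ball] using this
    refine ⟨k, hmono, hkpos, ?_⟩
    rw [Metric.tendsto_atTop]
    intro ε hε
    obtain ⟨N, hN⟩ := exists_nat_gt (1 / ε)
    refine ⟨N, fun n hn => ?_⟩
    have h1 : (1 : ℝ) / ε < n + 1 := by
      have : (N : ℝ) ≤ n := by exact_mod_cast hn
      linarith
    have h2 : (1 : ℝ) / (n + 1) < ε := by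
      rw [div_lt_iff₀ (by positivity)]
      rw [div_lt_iff₀ hε] at h1
      linarith
    exact (hdist n).trans h2
end

section
/- A dynamical system (X,T) is weakly mixing (i.e., X × X with T × T is topologically transitive) if and only if for every pair of non-empty open subsets U, V of X, the hitting time set N(U,V) is thick. -/
/-- `Hit T U V n` means `U ∩ T^{-n} V ≠ ∅`. -/
def Hit {X : Type*} (T : X → X) (U V : Set X) (n : ℕ) : Prop :=
  ∃ x, x ∈ U ∧ T^[n] x ∈ V

lemma prodIter {X : Type*} (T : X → X) (n : ℕ) (p : X × X) :
    (fun p : X × X => (T p.1, T p.2))^[n] p = (T^[n] p.1, T^[n] p.2) := by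
  induction n generalizing p with
  | zero => simp
  | succ n ih =>
      rw [Function.iterate_succ_apply, Function.iterate_succ_apply,
        Function.iterate_succ_apply]
      exact ih _

/-- A non-trivial compact metric dynamical system `(X, T)` is weakly mixing
(the product system `(X × X, T × T)` is topologically transitive) iff for every
pair of non-empty open sets `U, V ⊆ X` the hitting time set
`N(U, V) = {n > 0 : U ∩ T^[-n] V ≠ ∅}` is thick. -/
theorem stmt10 {X : Type*} [MetricSpace X] [CompactSpace X] [Nontrivial X]
    (T : X ≃ₜ X) :
    (∀ W₁ W₂ : Set (X × X), IsOpen W₁ → IsOpen W₂ → W₁.Nonempty → W₂.Nonempty →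
      ∃ n : ℕ, 0 < n ∧
        (W₁ ∩ (fun p : X × X => (T p.1, T p.2))^[n] ⁻¹' W₂).Nonempty) ↔
    (∀ U V : Set X, IsOpen U → IsOpen V → U.Nonempty → V.Nonempty →
      ∀ m : ℕ, ∃ k : ℕ, ∀ i ≤ m,
        (k + i) ∈ {n : ℕ | 0 < n ∧ (U ∩ (⇑T)^[n] ⁻¹' V).Nonempty}) := by
  have hcont : ∀ n : ℕ, Continuous ((⇑T)^[n]) := fun n => T.continuous.iterate n
  have hsurj : ∀ (n : ℕ) (v : X), (⇑T)^[n] ((⇑T.symm)^[n] v) = v := fun n v =>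
    Function.LeftInverse.iterate (fun x => T.apply_symm_apply x) n v
  constructor
  · intro H
    -- pairing lemma
    have P : ∀ U₁ U₂ V₁ V₂ : Set X, IsOpen U₁ → IsOpen U₂ → IsOpen V₁ → IsOpen V₂ →
        U₁.Nonempty → U₂.Nonempty → V₁.Nonempty → V₂.Nonempty →
        ∃ n, 0 < n ∧ Hit (⇑T) U₁ V₁ n ∧ Hit (⇑T) U₂ V₂ n := by
      intro U₁ U₂ V₁ V₂ hU₁ hU₂ hV₁ hV₂ hU₁n hU₂n hV₁n hV₂n
      obtain ⟨n, hn, ⟨p, hp1, hp2⟩⟩ := H (U₁ ×ˢ U₂) (V₁ ×ˢ V₂) (hU₁.prod hU₂)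
        (hV₁.prod hV₂) (hU₁n.prod hU₂n) (hV₁n.prod hV₂n)
      rw [Set.mem_preimage, prodIter] at hp2
      exact ⟨n, hn, ⟨p.1, hp1.1, hp2.1⟩, ⟨p.2, hp1.2, hp2.2⟩⟩
    -- filter base lemma
    have FB : ∀ A₁ B₁ A₂ B₂ : Set X, IsOpen A₁ → IsOpen B₁ → IsOpen A₂ → IsOpen B₂ →
        A₁.Nonempty → B₁.Nonempty → A₂.Nonempty → B₂.Nonempty →
        ∃ U' V' : Set X, IsOpen U' ∧ IsOpen V' ∧ U'.Nonempty ∧ V'.Nonempty ∧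
          ∀ k, Hit (⇑T) U' V' k → Hit (⇑T) A₁ B₁ k ∧ Hit (⇑T) A₂ B₂ k := by
      intro A₁ B₁ A₂ B₂ hA₁ hB₁ hA₂ hB₂ hA₁n hB₁n hA₂n hB₂n
      obtain ⟨n, -, ⟨x, hx1, hx2⟩, ⟨y, hy1, hy2⟩⟩ :=
        P A₁ B₁ A₂ B₂ hA₁ hB₁ hA₂ hB₂ hA₁n hB₁n hA₂n hB₂n
      refine ⟨A₁ ∩ (⇑T)^[n] ⁻¹' A₂, B₁ ∩ (⇑T)^[n] ⁻¹' B₂,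
        hA₁.inter (hA₂.preimage (hcont n)), hB₁.inter (hB₂.preimage (hcont n)),
        ⟨x, hx1, hx2⟩, ⟨y, hy1, hy2⟩, ?_⟩
      intro k ⟨z, ⟨hz1, hz2⟩, hz3, hz4⟩
      refine ⟨⟨z, hz1, hz3⟩, ⟨(⇑T)^[n] z, hz2, ?_⟩⟩
      have : (⇑T)^[k] ((⇑T)^[n] z) = (⇑T)^[n] ((⇑T)^[k] z) := by
        rw [← Function.iterate_add_apply, ← Function.iterate_add_apply, Nat.add_comm]
      rw [this]
      exact hz4
    -- main induction
    have key : ∀ m : ℕ, ∀ U V : Set X, IsOpen U → IsOpen V → U.Nonempty → V.Nonempty →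
        ∃ U' V' : Set X, IsOpen U' ∧ IsOpen V' ∧ U'.Nonempty ∧ V'.Nonempty ∧
          ∀ k, Hit (⇑T) U' V' k → ∀ i ≤ m, Hit (⇑T) U V (k + i) := by
      intro m
      induction m with
      | zero =>
          intro U V hU hV hUn hVn
          refine ⟨U, V, hU, hV, hUn, hVn, fun k hk i hi => ?_⟩
          interval_cases i
          simpa using hk
      | succ m ih =>
          intro U V hU hV hUn hVn
          obtain ⟨U₁, V₁, hU₁, hV₁, hU₁n, hV₁n, h₁⟩ := ih U V hU hV hUn hVn
          have hWo : IsOpen ((⇑T)^[m + 1] ⁻¹' V) := hV.preimage (hcont (m + 1))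
          have hWn : ((⇑T)^[m + 1] ⁻¹' V).Nonempty := by
            obtain ⟨v, hv⟩ := hVn
            refine ⟨(⇑T.symm)^[m + 1] v, ?_⟩
            rw [Set.mem_preimage, hsurj]
            exact hv
          obtain ⟨U', V', hU', hV', hU'n, hV'n, h₂⟩ :=
            FB U₁ V₁ U ((⇑T)^[m + 1] ⁻¹' V) hU₁ hV₁ hU hWo hU₁n hV₁n hUn hWn
          refine ⟨U', V', hU', hV', hU'n, hV'n, fun k hk i hi => ?_⟩
          obtain ⟨hk1, hk2⟩ := h₂ k hk
          rcases Nat.lt_or_ge i (m + 1) with h | h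
          · exact h₁ k hk1 i (Nat.lt_succ_iff.mp h)
          · have hi' : i = m + 1 := le_antisymm hi h
            subst hi'
            obtain ⟨x, hx1, hx2⟩ := hk2
            refine ⟨x, hx1, ?_⟩
            rw [Set.mem_preimage] at hx2
            have : (⇑T)^[k + (m + 1)] x = (⇑T)^[m + 1] ((⇑T)^[k] x) := by
              rw [← Function.iterate_add_apply, Nat.add_comm]
            rw [this]
            exact hx2
    intro U V hU hV hUn hVn m
    obtain ⟨U', V', hU', hV', hU'n, hV'n, h⟩ := key m U V hU hV hUn hVn
    obtain ⟨n, hn, hh, -⟩ := P U' U' V' V' hU' hU' hV' hV' hU'n hU'n hV'n hV'n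
    refine ⟨n, fun i hi => ?_⟩
    obtain ⟨x, hx1, hx2⟩ := h n hh i hi
    exact ⟨by omega, ⟨x, hx1, hx2⟩⟩
  · intro H W₁ W₂ hW₁ hW₂ hW₁n hW₂n
    obtain ⟨⟨a, b⟩, hab⟩ := hW₁n
    obtain ⟨⟨c, d⟩, hcd⟩ := hW₂n
    obtain ⟨A₁, A₂, hA₁, hA₂, ha, hb, hsub₁⟩ := isOpen_prod_iff.mp hW₁ a b hab
    obtain ⟨B₁, B₂, hB₁, hB₂, hc, hd, hsub₂⟩ := isOpen_prod_iff.mp hW₂ c d hcd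
    -- pick n₁ ∈ N(A₁, A₂)
    obtain ⟨k₁, hk₁⟩ := H A₁ A₂ hA₁ hA₂ ⟨a, ha⟩ ⟨b, hb⟩ 0
    obtain ⟨hk₁pos, x₁, hx₁, hx₁'⟩ : 0 < k₁ ∧ ∃ x, x ∈ A₁ ∧ (⇑T)^[k₁] x ∈ A₂ := by
      have := hk₁ 0 le_rfl
      simp only [Set.mem_setOf_eq, Nat.add_zero] at this
      exact ⟨this.1, this.2⟩
    set n₁ := k₁
    -- pick n₂ ∈ N(B₁, B₂) with n₂ ≥ n₁
    obtain ⟨k₂, hk₂⟩ := H B₁ B₂ hB₁ hB₂ ⟨c, hc⟩ ⟨d, hd⟩ n₁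
    obtain ⟨hk₂pos, y₁, hy₁, hy₁'⟩ :
        0 < k₂ + n₁ ∧ ∃ y, y ∈ B₁ ∧ (⇑T)^[k₂ + n₁] y ∈ B₂ := by
      have := hk₂ n₁ le_rfl
      simp only [Set.mem_setOf_eq] at this
      exact ⟨this.1, this.2⟩
    set n₂ := k₂ + n₁ with hn₂
    have hn₁₂ : n₁ ≤ n₂ := by omega
    set U : Set X := A₁ ∩ (⇑T)^[n₁] ⁻¹' A₂ with hUdef
    set V : Set X := B₁ ∩ (⇑T)^[n₂] ⁻¹' B₂ with hVdef
    have hUo : IsOpen U := hA₁.inter (hA₂.preimage (T.continuous.iterate n₁))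
    have hVo : IsOpen V := hB₁.inter (hB₂.preimage (T.continuous.iterate n₂))
    have hUn : U.Nonempty := ⟨x₁, hx₁, hx₁'⟩
    have hVn : V.Nonempty := ⟨y₁, hy₁, hy₁'⟩
    set dd := n₂ - n₁ with hdd
    obtain ⟨k, hk⟩ := H U V hUo hVo hUn hVn dd
    have h0 := hk 0 (Nat.zero_le _)
    have hd := hk dd le_rfl
    simp only [Set.mem_setOf_eq, Nat.add_zero] at h0 hd
    -- the common time
    set n := k + dd with hn
    have hnpos : 0 < n := by omega
    -- from h0 : k ∈ N(U,V), get n ∈ N(A₂,B₂)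
    obtain ⟨x, ⟨hxA₁, hxA₂⟩, hxB₁, hxB₂⟩ :
        ∃ x, (x ∈ A₁ ∧ (⇑T)^[n₁] x ∈ A₂) ∧ (⇑T)^[k] x ∈ B₁ ∧
          (⇑T)^[n₂] ((⇑T)^[k] x) ∈ B₂ := by
      obtain ⟨x, hx⟩ := h0.2
      exact ⟨x, hx.1, hx.2⟩
    -- from hd : k + dd ∈ N(U,V), get n ∈ N(A₁,B₁)
    obtain ⟨y, ⟨hyA₁, -⟩, hyB₁, -⟩ :
        ∃ y, (y ∈ A₁ ∧ (⇑T)^[n₁] y ∈ A₂) ∧ (⇑T)^[n] y ∈ B₁ ∧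
          (⇑T)^[n₂] ((⇑T)^[n] y) ∈ B₂ := by
      obtain ⟨y, hy⟩ := hd.2
      exact ⟨y, hy.1, hy.2⟩
    have hxB₂' : (⇑T)^[n] ((⇑T)^[n₁] x) ∈ B₂ := by
      have e : (⇑T)^[n] ((⇑T)^[n₁] x) = (⇑T)^[n₂] ((⇑T)^[k] x) := by
        rw [← Function.iterate_add_apply, ← Function.iterate_add_apply]
        congr 1
        omega
      rw [e]; exact hxB₂
    refine ⟨n, hnpos, ⟨(y, (⇑T)^[n₁] x), ?_, ?_⟩⟩
    · exact hsub₁ (Set.mk_mem_prod hyA₁ hxA₂)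
    · rw [Set.mem_preimage, prodIter]
      exact hsub₂ (Set.mk_mem_prod hyB₁ hxB₂')
end

section
/- If A is an F-mixing subset of a dynamical system (X,T) for a proper Furstenberg family F consisting of infinite sets, then A is a perfect set (closed with no isolated points). -/
/-- The hitting time set `N(U, V) = {n > 0 : U ∩ T^[-n] V ≠ ∅}`. -/
def hitting {X : Type*} (T : X → X) (U V : Set X) : Set ℕ :=
  {n : ℕ | 0 < n ∧ (U ∩ T^[n] ⁻¹' V).Nonempty}

/-- If `A` is an `F`-mixing subset of a compact metric dynamical system `(X, T)`
for a proper Furstenberg family `F` consisting of infinite sets, then `A` is a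
perfect set. -/
theorem stmt12 {X : Type*} [MetricSpace X] [CompactSpace X] (T : X ≃ₜ X)
    (F : Set (Set ℕ))
    (hered : ∀ A B : Set ℕ, A ⊆ B → A ∈ F → B ∈ F)
    (hproper : ∅ ∉ F)
    (hinf : ∀ A ∈ F, A.Infinite)
    (A : Set X) (hA : IsClosed A)
    (htwo : ∃ a ∈ A, ∃ b ∈ A, a ≠ b)
    (hmix : ∀ (k : ℕ) (U V : Fin k → Set X),
      (∀ i, IsOpen (U i) ∧ (U i ∩ A).Nonempty ∧ IsOpen (V i) ∧ (V i ∩ A).Nonempty) →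
      (⋂ i, hitting (⇑T) (U i ∩ A) (V i)) ∈ F) :
    Perfect A := by
  refine ⟨hA, fun x hx => ?_⟩
  rw [accPt_iff_nhds]
  intro Unbd hU
  by_contra hcon
  push_neg at hcon
  -- so Unbd ∩ A ⊆ {x}
  have hsub : ∀ y ∈ Unbd ∩ A, y = x := fun y hy => by
    by_contra h; exact h (hcon y hy)
  obtain ⟨U', hU'U, hU'open, hxU'⟩ := mem_nhds_iff.mp hU
  obtain ⟨a, ha, b, hb, hab⟩ := htwo
  set r := dist a b / 2 with hr
  have hrpos : 0 < r := by rw [hr]; have := dist_pos.mpr hab; linarith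
  have key := hmix 2 ![U', U'] ![Metric.ball a r, Metric.ball b r] ?_
  · have hne : (⋂ i : Fin 2, hitting (⇑T) ((![U', U'] i) ∩ A)
        (![Metric.ball a r, Metric.ball b r] i)) ≠ ∅ := fun h => hproper (h ▸ key)
    obtain ⟨n, hn⟩ := Set.nonempty_iff_ne_empty.mpr hne
    rw [Set.mem_iInter] at hn
    have h0 := hn 0
    have h1 := hn 1
    simp only [Matrix.cons_val_zero, Matrix.cons_val_one, Matrix.head_cons, hitting,
      Set.mem_setOf_eq] at h0 h1
    obtain ⟨-, y, ⟨hyU, hyA⟩, hy⟩ := h0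
    obtain ⟨-, z, ⟨hzU, hzA⟩, hz⟩ := h1
    have hyx : y = x := hsub y ⟨hU'U hyU, hyA⟩
    have hzx : z = x := hsub z ⟨hU'U hzU, hzA⟩
    rw [hyx] at hy; rw [hzx] at hz
    have : dist a b < dist a b := by
      calc dist a b ≤ dist a (T^[n] x) + dist (T^[n] x) b := dist_triangle _ _ _
        _ < r + r := by
            refine add_lt_add ?_ ?_
            · rw [dist_comm]; exact Metric.mem_ball.mp hy
            · exact Metric.mem_ball.mp hz
        _ = dist a b := by rw [hr]; ring
    exact absurd this (lt_irrefl _)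
  · intro i
    fin_cases i <;>
      simp only [Matrix.cons_val_zero, Matrix.cons_val_one, Matrix.head_cons] <;>
      exact ⟨hU'open, ⟨x, hxU', hx⟩, Metric.isOpen_ball,
        by first
          | exact ⟨a, Metric.mem_ball_self hrpos, ha⟩
          | exact ⟨b, Metric.mem_ball_self hrpos, hb⟩⟩
end

section
/- Let X be a compact metric space without isolated points and R a G_δ subset of X^n. Then the collection of closed R-dependent subsets of X is a G_δ subset of the hyperspace 2^X, where a set K with at least n points is R-dependent if every n-tuple of pairwise distinct elements of K lies in R. -/
open TopologicalSpace

/-- An injective tuple in a metric space has a uniform positive separation. -/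
lemma stmt14_sep {X : Type*} [MetricSpace X] {n : ℕ} {x : Fin n → X}
    (hx : Function.Injective x) :
    ∃ ε > 0, ∀ i j, i ≠ j → ε ≤ dist (x i) (x j) := by
  classical
  set S : Finset (Fin n × Fin n) := Finset.univ.filter (fun p => p.1 ≠ p.2) with hS
  rcases S.eq_empty_or_nonempty with h | h
  · refine ⟨1, one_pos, fun i j hij => absurd h (Finset.ne_empty_of_mem
      (a := (i, j)) (s := S) (Finset.mem_filter.2 ⟨Finset.mem_univ _, hij⟩))⟩
  · refine ⟨S.inf' h (fun p => dist (x p.1) (x p.2)), ?_, fun i j hij => ?_⟩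
    · rw [gt_iff_lt, Finset.lt_inf'_iff]
      intro p hp
      rw [hS] at hp
      have hne : p.1 ≠ p.2 := (Finset.mem_filter.1 hp).2
      exact dist_pos.2 (fun hd => hne (hx hd))
    · exact Finset.inf'_le (fun p : Fin n × Fin n => dist (x p.1) (x p.2))
        (show (i, j) ∈ S from Finset.mem_filter.2 ⟨Finset.mem_univ _, hij⟩)

/-- Key openness lemma: if every `K`-tuple with separation `≥ δ'` lies in the open
set `V`, then the same holds with separation `≥ δ > δ'` for all compacta close to `K`. -/
lemma stmt14_ball {X : Type*} [MetricSpace X] [CompactSpace X] {n : ℕ}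
    {V : Set (Fin n → X)} (hV : IsOpen V) {δ' δ : ℝ} (hδ : δ' < δ)
    {K : NonemptyCompacts X}
    (hK : ∀ x : Fin n → X, (∀ i, x i ∈ (K : Set X)) →
      (∀ i j, i ≠ j → δ' ≤ dist (x i) (x j)) → x ∈ V) :
    ∃ ε > 0, ∀ K' : NonemptyCompacts X, dist K' K < ε →
      ∀ x : Fin n → X, (∀ i, x i ∈ (K' : Set X)) →
        (∀ i j, i ≠ j → δ ≤ dist (x i) (x j)) → x ∈ V := by
  set T : Set (Fin n → X) :=
    (Set.univ.pi fun _ => (K : Set X)) ∩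
      {x | ∀ i j, i ≠ j → δ' ≤ dist (x i) (x j)} with hT
  have hTV : T ⊆ V := fun x hx => hK x (fun i => hx.1 i (Set.mem_univ i)) hx.2
  have hTc : IsCompact T := by
    refine (isCompact_univ_pi fun _ => K.isCompact).inter_right ?_
    have : IsClosed (⋂ (i : Fin n) (j : Fin n) (_ : i ≠ j),
        {x : Fin n → X | δ' ≤ dist (x i) (x j)}) := by
      refine isClosed_iInter fun i => isClosed_iInter fun j => isClosed_iInter fun _ => ?_
      exact isClosed_le continuous_const ((continuous_apply i).dist (continuous_apply j))
    convert this using 1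
    ext x; simp
  obtain ⟨ρ, hρ, hthick⟩ := hTc.exists_thickening_subset_open hV hTV
  refine ⟨min ρ ((δ - δ') / 2), lt_min hρ (by linarith), fun K' hKK' x hxK' hsep => ?_⟩
  have hfin : EMetric.hausdorffEdist (K' : Set X) (K : Set X) ≠ ⊤ :=
    Metric.hausdorffEdist_ne_top_of_nonempty_of_bounded K'.nonempty K.nonempty
      K'.isCompact.isBounded K.isCompact.isBounded
  have hmin : dist K' K < min ρ ((δ - δ') / 2) := hKK'
  have hd : Metric.hausdorffDist (K' : Set X) (K : Set X) < min ρ ((δ - δ') / 2) := hmin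
  have hy : ∀ i, ∃ y ∈ (K : Set X), dist (x i) y < min ρ ((δ - δ') / 2) := fun i =>
    Metric.exists_dist_lt_of_hausdorffDist_lt (hxK' i) hd hfin
  choose y hyK hyd using hy
  have hεle1 : min ρ ((δ - δ') / 2) ≤ ρ := min_le_left _ _
  have hεle2 : min ρ ((δ - δ') / 2) ≤ (δ - δ') / 2 := min_le_right _ _
  have hyT : y ∈ T := by
    refine ⟨fun i _ => hyK i, fun i j hij => ?_⟩
    have h1 : dist (x i) (x j) ≤ dist (x i) (y i) + dist (y i) (y j) + dist (y j) (x j) :=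
      dist_triangle4 _ _ _ _
    have h2 := hsep i j hij
    have h3 := hyd i
    have h4 := hyd j
    rw [dist_comm (y j) (x j)] at h1
    linarith
  have hxy : x ∈ Metric.thickening ρ T := by
    rw [Metric.mem_thickening_iff]
    refine ⟨y, hyT, ?_⟩
    rw [dist_pi_lt_iff hρ]
    exact fun i => lt_of_lt_of_le (hyd i) hεle1
  exact hthick hxy

/-- Let `X` be a compact metric space without isolated points and `R` a Gδ
subset of `X^n`. Then the collection of closed `R`-dependent subsets of `X`
(sets with at least `n` points all of whose `n`-tuples of pairwise distinct
elements lie in `R`) is a Gδ subset of the hyperspace `2^X`. -/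
theorem stmt14 {X : Type*} [MetricSpace X] [CompactSpace X]
    (hX : Preperfect (Set.univ : Set X))
    (n : ℕ) (R : Set (Fin n → X)) (hR : IsGδ R) :
    IsGδ {K : NonemptyCompacts X |
      (∃ f : Fin n ↪ X, ∀ i, f i ∈ (K : Set X)) ∧
      ∀ x : Fin n → X, (∀ i, x i ∈ (K : Set X)) → Function.Injective x → x ∈ R} := by
  obtain ⟨U, hUo, hUR⟩ := hR.eq_iInter_nat
  set A : Set (NonemptyCompacts X) :=
    {K | ∃ f : Fin n ↪ X, ∀ i, f i ∈ (K : Set X)} with hA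
  set F : ℕ → ℕ → Set (NonemptyCompacts X) := fun m k =>
    {K | ∀ x : Fin n → X, (∀ i, x i ∈ (K : Set X)) →
      (∀ i j, i ≠ j → 1 / (k + 1 : ℝ) ≤ dist (x i) (x j)) → x ∈ U m} with hF
  have hAopen : IsOpen A := by
    rw [Metric.isOpen_iff]
    rintro K ⟨f, hf⟩
    obtain ⟨ε, hε, hsep⟩ := stmt14_sep f.injective
    refine ⟨ε / 3, by linarith, fun K' hK' => ?_⟩
    rw [Metric.mem_ball] at hK'
    have hfin : EMetric.hausdorffEdist (K : Set X) (K' : Set X) ≠ ⊤ :=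
      Metric.hausdorffEdist_ne_top_of_nonempty_of_bounded K.nonempty K'.nonempty
        K.isCompact.isBounded K'.isCompact.isBounded
    have hd : Metric.hausdorffDist (K : Set X) (K' : Set X) < ε / 3 := by
      rw [Metric.hausdorffDist_comm]; exact hK'
    have hy : ∀ i, ∃ y ∈ (K' : Set X), dist (f i) y < ε / 3 := fun i =>
      Metric.exists_dist_lt_of_hausdorffDist_lt (hf i) hd hfin
    choose y hyK hyd using hy
    have hyinj : Function.Injective y := by
      intro i j hij
      by_contra hne
      have h1 := hsep i j hne
      have h2 : dist (f i) (f j) ≤ dist (f i) (y i) + dist (y i) (y j) + dist (y j) (f j) :=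
        dist_triangle4 _ _ _ _
      have h0 : dist (y i) (y j) = 0 := by rw [hij, dist_self]
      rw [h0, dist_comm (y j) (f j)] at h2
      have h3 := hyd i
      have h4 := hyd j
      linarith
    exact ⟨⟨y, hyinj⟩, hyK⟩
  have key : {K : NonemptyCompacts X |
      (∃ f : Fin n ↪ X, ∀ i, f i ∈ (K : Set X)) ∧
      ∀ x : Fin n → X, (∀ i, x i ∈ (K : Set X)) → Function.Injective x → x ∈ R} =
      A ∩ ⋂ (m : ℕ) (k : ℕ), interior (F m k) := by
    ext K
    simp only [Set.mem_setOf_eq, Set.mem_inter_iff, Set.mem_iInter]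
    constructor
    · rintro ⟨hKA, hKR⟩
      refine ⟨hKA, fun m k => ?_⟩
      -- K with separation 1/(k+2) lies in U m
      have hK' : ∀ x : Fin n → X, (∀ i, x i ∈ (K : Set X)) →
          (∀ i j, i ≠ j → 1 / (k + 2 : ℝ) ≤ dist (x i) (x j)) → x ∈ U m := by
        intro x hx hsep
        have hinj : Function.Injective x := by
          intro i j hij
          by_contra hne
          have := hsep i j hne
          rw [hij, dist_self] at this
          have h2 : (0 : ℝ) < 1 / (k + 2 : ℝ) := by positivity
          linarith
        have := hKR x hx hinj
        rw [hUR] at this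
        exact Set.mem_iInter.1 this m
      have hlt : 1 / (k + 2 : ℝ) < 1 / (k + 1 : ℝ) := by
        apply one_div_lt_one_div_of_lt <;> [positivity; linarith]
      obtain ⟨ε, hε, hball⟩ := stmt14_ball (hUo m) hlt hK'
      rw [mem_interior]
      refine ⟨Metric.ball K ε, fun K' hK'' => ?_, Metric.isOpen_ball, Metric.mem_ball_self hε⟩
      exact fun x hx hsep => hball K' (Metric.mem_ball.1 hK'') x hx hsep
    · rintro ⟨hKA, hKF⟩
      refine ⟨hKA, fun x hx hinj => ?_⟩
      rw [hUR, Set.mem_iInter]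
      intro m
      obtain ⟨ε, hε, hsep⟩ := stmt14_sep hinj
      obtain ⟨k, hk⟩ := exists_nat_one_div_lt hε
      have := interior_subset (hKF m k)
      exact this x hx fun i j hij => le_trans (le_of_lt (by exact_mod_cast hk)) (hsep i j hij)
  rw [key]
  exact IsGδ.inter hAopen.isGδ
    (IsGδ.iInter fun m => IsGδ.iInter fun k => isOpen_interior.isGδ)
end

section
/- Let π : X → Y be an open continuous surjection between compact metric spaces. If E ⊆ X is a dense G_δ set, then there exists a dense G_δ subset Y₀ of Y such that for each y ∈ Y₀, the set E ∩ π^{-1}(y) is a dense G_δ subset of the fiber π^{-1}(y). -/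
open Set TopologicalSpace

private lemma isGδ_preimage {A B : Type*} [TopologicalSpace A] [TopologicalSpace B]
    {f : A → B} (hf : Continuous f) {s : Set B} (h : IsGδ s) : IsGδ (f ⁻¹' s) := by
  obtain ⟨T, hTo, hTc, rfl⟩ := h
  rw [preimage_sInter]
  exact IsGδ.biInter hTc fun t ht => ((hTo t ht).preimage hf).isGδ

/-- Let `π : X → Y` be an open continuous surjection between compact metric
spaces. If `E ⊆ X` is a dense Gδ set, then there is a dense Gδ subset `Y₀` of
`Y` such that for each `y ∈ Y₀`, the set `E ∩ π⁻¹(y)` is a dense Gδ subset of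
the fiber `π⁻¹(y)`. -/
theorem stmt15 {X Y : Type*} [MetricSpace X] [CompactSpace X]
    [MetricSpace Y] [CompactSpace Y]
    (π : X → Y) (hc : Continuous π) (hs : Function.Surjective π)
    (ho : IsOpenMap π) (E : Set X) (hdense : Dense E) (hGδ : IsGδ E) :
    ∃ Y₀ : Set Y, Dense Y₀ ∧ IsGδ Y₀ ∧ ∀ y ∈ Y₀,
      Dense (Subtype.val ⁻¹' E : Set (π ⁻¹' {y})) ∧
      IsGδ (Subtype.val ⁻¹' E : Set (π ⁻¹' {y})) := by
  obtain ⟨T, hTo, hTc, hTE⟩ := hGδ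
  obtain ⟨b, hbc, -, hb⟩ := TopologicalSpace.exists_countable_basis X
  -- each U ∈ T is open and dense
  have hUdense : ∀ U ∈ T, Dense U := fun U hU =>
    hdense.mono (hTE ▸ sInter_subset_of_mem hU)
  -- the key open dense sets in Y
  set G : Set X × Set X → Set Y :=
    fun p => π '' (p.2 ∩ p.1) ∪ (closure (π '' p.2))ᶜ with hG
  have hGopen : ∀ p ∈ T ×ˢ b, IsOpen (G p) := by
    rintro ⟨U, V⟩ ⟨hU, hV⟩
    exact (ho _ ((hb.isOpen hV).inter (hTo U hU))).union isClosed_closure.isOpen_compl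
  have hGdense : ∀ p ∈ T ×ˢ b, Dense (G p) := by
    rintro ⟨U, V⟩ ⟨hU, hV⟩
    rw [dense_iff_inter_open]
    intro O hO hOne
    by_cases hcase : (O ∩ π '' V).Nonempty
    · obtain ⟨y0, hy0O, x0, hx0V, rfl⟩ := hcase
      have hW : IsOpen (V ∩ π ⁻¹' O) := (hb.isOpen hV).inter (hO.preimage hc)
      obtain ⟨x1, ⟨hx1V, hx1O⟩, hx1U⟩ :=
        ((hUdense U hU).inter_open_nonempty _ hW ⟨x0, hx0V, hy0O⟩)
      exact ⟨π x1, hx1O, Or.inl ⟨x1, ⟨hx1V, hx1U⟩, rfl⟩⟩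
    · obtain ⟨y0, hy0⟩ := hOne
      refine ⟨y0, hy0, Or.inr ?_⟩
      intro hmem
      have hsub : closure (π '' V) ⊆ Oᶜ := by
        apply closure_minimal _ hO.isClosed_compl
        intro z hz hzO
        exact absurd ⟨z, hzO, hz⟩ hcase
      exact hsub hmem hy0
  refine ⟨⋂ p ∈ T ×ˢ b, G p, ?_, ?_, ?_⟩
  · exact dense_biInter_of_isOpen hGopen (hTc.prod hbc) hGdense
  · exact IsGδ.biInter (hTc.prod hbc) fun p hp => (hGopen p hp).isGδ
  · intro y hy
    -- fiber instances
    have hFc : IsClosed (π ⁻¹' {y}) := isClosed_singleton.preimage hc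
    haveI : CompactSpace (π ⁻¹' {y}) :=
      isCompact_iff_compactSpace.mp (hFc.isCompact)
    constructor
    · -- density in the fiber
      -- each U ∈ T pulls back to a dense open set of the fiber
      have key : ∀ U ∈ T, Dense (Subtype.val ⁻¹' U : Set (π ⁻¹' {y})) := by
        intro U hU
        rw [dense_iff_inter_open]
        intro O hO hOne
        obtain ⟨W, hW, rfl⟩ := isOpen_induced_iff.mp hO
        obtain ⟨⟨x, hxF⟩, hxW⟩ := hOne
        obtain ⟨V, hVb, hxV, hVW⟩ := hb.exists_subset_of_mem_open hxW hW
        have hyG : y ∈ G (U, V) := mem_iInter₂.mp hy (U, V) ⟨hU, hVb⟩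
        have hycl : y ∈ closure (π '' V) :=
          subset_closure ⟨x, hxV, hxF⟩
        rcases hyG with hyim | hnc
        · obtain ⟨x', ⟨hx'V, hx'U⟩, hx'y⟩ := hyim
          exact ⟨⟨x', hx'y⟩, hVW hx'V, hx'U⟩
        · exact absurd hycl hnc
      -- Baire category on the compact fiber
      have hEq : (Subtype.val ⁻¹' E : Set (π ⁻¹' {y})) =
          ⋂ U ∈ T, (Subtype.val ⁻¹' U : Set (π ⁻¹' {y})) := by
        rw [hTE, preimage_sInter]
      rw [hEq]
      exact dense_biInter_of_isOpen
        (fun U hU => (hTo U hU).preimage continuous_subtype_val) hTc key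
    · exact isGδ_preimage continuous_subtype_val ⟨T, hTo, hTc, hTE⟩
end

section
/- Let π : (X,T) → (Y,S) be a factor map between dynamical systems that is not a homeomorphism, and suppose that for every n ≥ 2 the system (R_π^{(n)}, T^{(n)}) is transitive, where R_π^{(n)} = {(x₁,...,xₙ) ∈ X^n : π(x₁) = ⋯ = π(xₙ)}. Then the set of perfect members of the fiber space H_π is a dense G_δ subset of H_π. -/
open TopologicalSpace

open Metric Set Filter
open scoped Classical

open scoped Classical

section Gdelta

variable {X : Type*} [MetricSpace X]

lemma nc_edist_ne_top (A B : NonemptyCompacts X) :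
    EMetric.hausdorffEdist (A : Set X) (B : Set X) ≠ ⊤ :=
  Metric.hausdorffEdist_ne_top_of_nonempty_of_bounded A.nonempty B.nonempty
    A.isCompact.isBounded B.isCompact.isBounded

lemma isOpen_G (c : ℝ) :
    IsOpen {A : NonemptyCompacts X | ∀ x ∈ (A : Set X), ∃ y ∈ (A : Set X),
      x ≠ y ∧ dist x y < c} := by
  rw [Metric.isOpen_iff]
  intro A hA
  choose y hy hxy hlt using hA
  set m : X → ℝ := fun x => if h : x ∈ (A : Set X) then
      min (dist x (y x h)) (c - dist x (y x h)) else 1 with hm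
  have hmpos : ∀ x ∈ (A : Set X), 0 < m x := by
    intro x hx
    simp only [hm, dif_pos hx, lt_min_iff]
    exact ⟨dist_pos.2 (hxy x hx), by linarith [hlt x hx]⟩
  obtain ⟨t, htA, hcov⟩ := A.isCompact.elim_nhds_subcover
    (fun x => ball x (m x / 4)) (fun x hx => ball_mem_nhds x (by linarith [hmpos x hx]))
  have htne : t.Nonempty := by
    rcases A.nonempty with ⟨a, ha⟩
    rcases mem_iUnion₂.1 (hcov ha) with ⟨i, hi, _⟩
    exact ⟨i, hi⟩
  set e : ℝ := t.inf' htne (fun x => m x / 4) with he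
  have hepos : 0 < e := by
    rw [he, Finset.lt_inf'_iff]
    intro i hi; linarith [hmpos i (htA i hi)]
  have key : ∀ x ∈ (A : Set X), ∃ z ∈ (A : Set X), 3 * e ≤ dist x z ∧ dist x z ≤ c - 3 * e := by
    intro x hx
    rcases mem_iUnion₂.1 (hcov hx) with ⟨i, hi, hxi⟩
    have hiA : i ∈ (A : Set X) := htA i hi
    have hei : e ≤ m i / 4 := Finset.inf'_le _ hi
    have hmi : m i = min (dist i (y i hiA)) (c - dist i (y i hiA)) := dif_pos hiA
    have h1 : m i ≤ dist i (y i hiA) := by rw [hmi]; exact min_le_left _ _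
    have h2 : m i ≤ c - dist i (y i hiA) := by rw [hmi]; exact min_le_right _ _
    have hxi' : dist x i < m i / 4 := mem_ball.1 hxi
    refine ⟨y i hiA, hy i hiA, ?_, ?_⟩
    · nlinarith [dist_triangle i x (y i hiA), dist_comm x i]
    · nlinarith [dist_triangle x i (y i hiA)]
  refine ⟨e, hepos, ?_⟩
  intro B hB
  rw [mem_ball, NonemptyCompacts.dist_eq] at hB
  intro x' hx'
  obtain ⟨x, hx, hxx'⟩ := Metric.exists_dist_lt_of_hausdorffDist_lt hx' hB (nc_edist_ne_top B A)
  obtain ⟨z, hz, hz1, hz2⟩ := key x hx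
  obtain ⟨z', hzz'⟩ := Metric.exists_dist_lt_of_hausdorffDist_lt' hz hB (nc_edist_ne_top B A)
  obtain ⟨hz', hzz'⟩ := hzz'
  rw [dist_comm] at hzz'
  have d1 : dist x' z' > e := by
    nlinarith [dist_triangle x' z' z, dist_triangle x z' z, dist_triangle x x' z',
      dist_comm x x', dist_comm z z']
  refine ⟨z', hz', ?_, ?_⟩
  · intro h; rw [h] at d1; simp at d1; linarith
  · have hx2 : dist x x' < e := by rw [dist_comm]; exact hxx'
    calc dist x' z' ≤ dist x x' + dist x z' := dist_triangle_left _ _ _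
      _ ≤ dist x x' + (dist x z + dist z z') := by linarith [dist_triangle x z z']
      _ < e + ((c - 3*e) + e) := by linarith
      _ < c := by linarith

lemma isGδ_perfect_nc : IsGδ {A : NonemptyCompacts X | Perfect (A : Set X)} := by
  have : {A : NonemptyCompacts X | Perfect (A : Set X)} =
      ⋂ n : ℕ, {A : NonemptyCompacts X | ∀ x ∈ (A : Set X), ∃ y ∈ (A : Set X),
        x ≠ y ∧ dist x y < 1 / (n + 1)} := by
    ext A
    simp only [mem_setOf_eq, mem_iInter]
    constructor
    · intro hP n x hx
      have := hP.acc x hx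
      rw [accPt_iff_nhds] at this
      obtain ⟨y, ⟨hy1, hy2⟩, hy3⟩ := this (ball x (1 / (n + 1)))
        (ball_mem_nhds x (by positivity))
      exact ⟨y, hy2, fun h => hy3 (h ▸ rfl), by rw [dist_comm]; exact mem_ball.1 hy1⟩
    · intro h
      refine ⟨A.isCompact.isClosed, fun x hx => ?_⟩
      rw [accPt_iff_nhds]
      intro U hU
      obtain ⟨r, hr, hball⟩ := Metric.mem_nhds_iff.1 hU
      obtain ⟨n, hn⟩ := exists_nat_one_div_lt hr
      obtain ⟨y, hy, hxy, hlt⟩ := h n x hx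
      have hlt' : dist y x < r := by
        rw [dist_comm]
        exact lt_trans hlt (by exact_mod_cast hn)
      exact ⟨y, ⟨hball (mem_ball.2 hlt'), hy⟩, fun h => hxy h.symm⟩
  rw [this]
  exact IsGδ.iInter fun n => (isOpen_G _).isGδ

lemma IsGδ.preimage' {α β : Type*} [TopologicalSpace α] [TopologicalSpace β] {s : Set β}
    (hs : IsGδ s) {f : α → β} (hf : Continuous f) : IsGδ (f ⁻¹' s) := by
  obtain ⟨T, hTo, hTc, rfl⟩ := hs
  rw [sInter_eq_biInter, preimage_iInter₂]
  exact IsGδ.biInter hTc fun t ht => ((hTo t ht).preimage hf).isGδ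

end Gdelta

section Seq

lemma exists_seq_rec {α : ℕ → Sort*} (P : ∀ k, α k → Prop) (Q : ∀ k, α k → α (k+1) → Prop)
    (a0 : α 0) (h0 : P 0 a0)
    (step : ∀ k (a : α k), P k a → ∃ b : α (k+1), P (k+1) b ∧ Q k a b) :
    ∃ f : ∀ k, α k, f 0 = a0 ∧ ∀ k, P k (f k) ∧ Q k (f k) (f (k+1)) := by
  let g : ∀ k, {a : α k // P k a} := fun k => Nat.rec ⟨a0, h0⟩
    (fun k ih => ⟨(step k ih.1 ih.2).choose, (step k ih.1 ih.2).choose_spec.1⟩) k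
  refine ⟨fun k => (g k).1, rfl, fun k => ⟨(g k).2, ?_⟩⟩
  exact (step k (g k).1 (g k).2).choose_spec.2

end Seq

section Scheme

lemma pow_succ_eq (N k : ℕ) : N * 2^(k+1) = 2 * (N * 2^k) := by rw [pow_succ]; ring

def hlf {N k : ℕ} (j : Fin (N * 2^(k+1))) : Fin (N * 2^k) :=
  ⟨j.val / 2, by have h1 : (j : ℕ) < 2 * (N * 2^k) := pow_succ_eq N k ▸ j.2; omega⟩

def dbl0 {N k : ℕ} (i : Fin (N * 2^k)) : Fin (N * 2^(k+1)) :=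
  ⟨2 * i.val, by rw [pow_succ_eq]; omega⟩

def dbl1 {N k : ℕ} (i : Fin (N * 2^k)) : Fin (N * 2^(k+1)) :=
  ⟨2 * i.val + 1, by rw [pow_succ_eq]; have := i.2; omega⟩

lemma hlf_dbl0 {N k : ℕ} (i : Fin (N * 2^k)) : hlf (dbl0 i) = i := by
  apply Fin.ext; show 2 * i.val / 2 = i.val; omega

lemma hlf_dbl1 {N k : ℕ} (i : Fin (N * 2^k)) : hlf (dbl1 i) = i := by
  apply Fin.ext; show (2 * i.val + 1) / 2 = i.val; omega

end Scheme

section Doubling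

lemma iter_pi {X : Type*} {n : ℕ} (T : X → X) (m : ℕ) (w : Fin n → X) :
    (fun x : Fin n → X => fun i => T (x i))^[m] w = fun i => T^[m] (w i) := by
  induction m with
  | zero => rfl
  | succ m ih =>
    rw [Function.iterate_succ_apply', ih]
    funext i
    simp [Function.iterate_succ_apply']

variable {X Y : Type*} [MetricSpace X] [MetricSpace Y]

lemma doubling (T : X ≃ₜ X) (π : X → Y)
    (htrans : ∀ n : ℕ, 2 ≤ n →
      ∀ U V : Set (Fin n → X), IsOpen U → IsOpen V →
        (U ∩ {x | ∀ i j, π (x i) = π (x j)}).Nonempty →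
        (V ∩ {x | ∀ i j, π (x i) = π (x j)}).Nonempty →
        ∃ m : ℕ, 0 < m ∧
          (U ∩ {x | ∀ i j, π (x i) = π (x j)} ∩
            (fun x : Fin n → X => fun i => T (x i))^[m] ⁻¹' V).Nonempty)
    (a b : X) (hab : a ≠ b) (hπab : π a = π b)
    (n : ℕ) (hn : 1 ≤ n) (x : Fin n → X) (hx : ∀ i j, π (x i) = π (x j))
    (ε : ℝ) (hε : 0 < ε) :
    ∃ z z' : Fin n → X,
      (∀ i j, π (z i) = π (z j) ∧ π (z i) = π (z' j) ∧ π (z' i) = π (z' j)) ∧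
      (∀ i, dist (z i) (x i) < ε) ∧ (∀ i, dist (z' i) (x i) < ε) ∧ (∀ i, z i ≠ z' i) := by
  have hdab : 0 < dist a b := dist_pos.2 hab
  set q : Fin (2*n) → Fin n := fun i => ⟨i.val / 2, by have := i.2; omega⟩ with hq
  set U : Set (Fin (2*n) → X) := ⋂ i, (fun u => u i) ⁻¹' Metric.ball (x (q i)) ε with hU
  set V : Set (Fin (2*n) → X) :=
    ⋂ i : Fin (2*n), (fun u => u i) ⁻¹'
      Metric.ball (if i.val % 2 = 0 then a else b) (dist a b / 2) with hV
  have hUo : IsOpen U := isOpen_iInter_of_finite fun i =>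
    Metric.isOpen_ball.preimage (continuous_apply i)
  have hVo : IsOpen V := isOpen_iInter_of_finite fun i =>
    Metric.isOpen_ball.preimage (continuous_apply i)
  have hUne : (U ∩ {w : Fin (2*n) → X | ∀ i j, π (w i) = π (w j)}).Nonempty :=
    ⟨fun i => x (q i), mem_iInter.2 fun i => Metric.mem_ball_self hε, fun i j => hx _ _⟩
  have hVne : (V ∩ {w : Fin (2*n) → X | ∀ i j, π (w i) = π (w j)}).Nonempty := by
    refine ⟨fun i => if i.val % 2 = 0 then a else b, mem_iInter.2 fun i => ?_, fun i j => ?_⟩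
    · show (if (i:ℕ) % 2 = 0 then a else b) ∈ Metric.ball (if (i:ℕ) % 2 = 0 then a else b) _
      exact Metric.mem_ball_self (by linarith)
    · show π (if (i:ℕ) % 2 = 0 then a else b) = π (if (j:ℕ) % 2 = 0 then a else b)
      by_cases hi : (i:ℕ) % 2 = 0 <;> by_cases hj : (j:ℕ) % 2 = 0 <;> simp [hi, hj, hπab]
  obtain ⟨m, hm, w, ⟨⟨hwU, hwR⟩, hwV⟩⟩ := htrans (2*n) (by omega) U V hUo hVo hUne hVne
  rw [Set.mem_preimage, iter_pi] at hwV
  have hwV' : ∀ i : Fin (2*n), (⇑T)^[m] (w i) ∈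
      Metric.ball (if i.val % 2 = 0 then a else b) (dist a b / 2) :=
    fun i => mem_iInter.1 hwV i
  have hwU' : ∀ i : Fin (2*n), w i ∈ Metric.ball (x (q i)) ε := fun i => mem_iInter.1 hwU i
  refine ⟨fun i => w ⟨2*i.val, by omega⟩, fun i => w ⟨2*i.val+1, by omega⟩,
    fun i j => ⟨hwR _ _, hwR _ _, hwR _ _⟩, ?_, ?_, ?_⟩
  · intro i
    have := hwU' ⟨2*i.val, by omega⟩
    have hqe : q ⟨2*i.val, by omega⟩ = i := by apply Fin.ext; show 2*i.val/2 = i.val; omega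
    rw [hqe] at this
    exact mem_ball.1 this
  · intro i
    have := hwU' ⟨2*i.val+1, by omega⟩
    have hqe : q ⟨2*i.val+1, by omega⟩ = i := by
      apply Fin.ext; show (2*i.val+1)/2 = i.val; omega
    rw [hqe] at this
    exact mem_ball.1 this
  · intro i h
    dsimp only at h
    have h0 := hwV' ⟨2*i.val, by omega⟩
    have h1 := hwV' ⟨2*i.val+1, by omega⟩
    rw [if_pos (by simp : (2*i.val) % 2 = 0)] at h0
    rw [if_neg (by omega : ¬ (2*i.val+1) % 2 = 0)] at h1
    rw [h] at h0
    have d0 : dist ((⇑T)^[m] (w ⟨2*i.val+1, by omega⟩)) a < dist a b / 2 := mem_ball.1 h0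
    have d1 : dist ((⇑T)^[m] (w ⟨2*i.val+1, by omega⟩)) b < dist a b / 2 := mem_ball.1 h1
    have := dist_triangle_left a b ((⇑T)^[m] (w ⟨2*i.val+1, by omega⟩))
    linarith

end Doubling

section Core

variable {X Y : Type*} [MetricSpace X] [CompactSpace X] [MetricSpace Y]

/-- One step of the Cantor scheme construction. -/
lemma scheme_step (T : X ≃ₜ X) (π : X → Y)
    (htrans : ∀ n : ℕ, 2 ≤ n →
      ∀ U V : Set (Fin n → X), IsOpen U → IsOpen V →
        (U ∩ {x | ∀ i j, π (x i) = π (x j)}).Nonempty →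
        (V ∩ {x | ∀ i j, π (x i) = π (x j)}).Nonempty →
        ∃ m : ℕ, 0 < m ∧
          (U ∩ {x | ∀ i j, π (x i) = π (x j)} ∩
            (fun x : Fin n → X => fun i => T (x i))^[m] ⁻¹' V).Nonempty)
    (a b : X) (hab : a ≠ b) (hπab : π a = π b)
    (N : ℕ) (hN : 1 ≤ N) (k : ℕ) (u : (Fin (N * 2^k) → X) × ℝ)
    (hu : 0 < u.2 ∧ ∀ i j, π (u.1 i) = π (u.1 j)) :
    ∃ v : (Fin (N * 2^(k+1)) → X) × ℝ,
      (0 < v.2 ∧ ∀ i j, π (v.1 i) = π (v.1 j)) ∧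
      (v.2 ≤ u.2 / 2 ∧ (∀ j, dist (v.1 j) (u.1 (hlf j)) ≤ u.2) ∧
        (∀ i, 6 * v.2 < dist (v.1 (dbl0 i)) (v.1 (dbl1 i)))) := by
  obtain ⟨hu1, hu2⟩ := hu
  have hpos : 0 < N * 2^k := Nat.mul_pos hN (pow_pos (by norm_num) k)
  haveI : Nonempty (Fin (N * 2^k)) := ⟨⟨0, hpos⟩⟩
  obtain ⟨z, z', hfib, hdz, hdz', hne⟩ :=
    doubling T π htrans a b hab hπab (N * 2^k) hpos u.1 hu2 u.2 hu1
  have hne' : (Finset.univ : Finset (Fin (N * 2^k))).Nonempty := Finset.univ_nonempty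
  set w : Fin (N * 2^(k+1)) → X := fun j => if j.val % 2 = 0 then z (hlf j) else z' (hlf j)
    with hw
  set δ : ℝ := min (u.2 / 2) ((Finset.univ.inf' hne' fun i => dist (z i) (z' i)) / 7) with hδ
  have hδpos : 0 < δ := by
    rw [hδ, lt_min_iff]
    constructor
    · linarith
    · have : 0 < Finset.univ.inf' hne' fun i => dist (z i) (z' i) := by
        rw [Finset.lt_inf'_iff]
        exact fun i _ => dist_pos.2 (hne i)
      linarith
  have hw0 : ∀ i : Fin (N * 2^k), w (dbl0 i) = z i := by
    intro i
    have h2 : (dbl0 i).val % 2 = 0 := by show 2 * i.val % 2 = 0; omega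
    rw [hw]
    simp only [h2, if_true, hlf_dbl0]
  have hw1 : ∀ i : Fin (N * 2^k), w (dbl1 i) = z' i := by
    intro i
    have h2 : ¬ (dbl1 i).val % 2 = 0 := by show ¬ (2 * i.val + 1) % 2 = 0; omega
    rw [hw]
    simp only [h2, if_false, hlf_dbl1]
  refine ⟨(w, δ), ⟨hδpos, ?_⟩, min_le_left _ _, ?_, ?_⟩
  · intro i j
    show π (w i) = π (w j)
    rw [hw]
    by_cases hi : (i : ℕ) % 2 = 0 <;> by_cases hj : (j : ℕ) % 2 = 0 <;>
      simp only [hi, hj, if_true, if_false]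
    · exact (hfib _ _).1
    · exact (hfib _ _).2.1
    · exact ((hfib _ _).2.1).symm
    · exact (hfib _ _).2.2
  · intro j
    show dist (w j) (u.1 (hlf j)) ≤ u.2
    rw [hw]
    by_cases hj : (j : ℕ) % 2 = 0 <;> simp only [hj, if_true, if_false]
    · exact (hdz (hlf j)).le
    · exact (hdz' (hlf j)).le
  · intro i
    show 6 * δ < dist (w (dbl0 i)) (w (dbl1 i))
    rw [hw0, hw1]
    have h7 : δ ≤ dist (z i) (z' i) / 7 :=
      le_trans (min_le_right _ _) (by
        apply div_le_div_of_nonneg_right ?_ (by norm_num)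
        exact Finset.inf'_le _ (Finset.mem_univ i))
    have : 0 < dist (z i) (z' i) := dist_pos.2 (hne i)
    linarith

lemma core_density (T : X ≃ₜ X) (π : X → Y) (hc : Continuous π)
    (htrans : ∀ n : ℕ, 2 ≤ n →
      ∀ U V : Set (Fin n → X), IsOpen U → IsOpen V →
        (U ∩ {x | ∀ i j, π (x i) = π (x j)}).Nonempty →
        (V ∩ {x | ∀ i j, π (x i) = π (x j)}).Nonempty →
        ∃ m : ℕ, 0 < m ∧
          (U ∩ {x | ∀ i j, π (x i) = π (x j)} ∩
            (fun x : Fin n → X => fun i => T (x i))^[m] ⁻¹' V).Nonempty)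
    (a b : X) (hab : a ≠ b) (hπab : π a = π b)
    (A : NonemptyCompacts X) (y₀ : Y) (hA : (A : Set X) ⊆ π ⁻¹' {y₀})
    (ε : ℝ) (hε : 0 < ε) :
    ∃ B : NonemptyCompacts X, (∃ y, (B : Set X) ⊆ π ⁻¹' {y}) ∧ Perfect (B : Set X) ∧
      Metric.hausdorffDist (B : Set X) (A : Set X) < ε := by
  -- finite net inside A
  obtain ⟨t, htA, htfin, htcov⟩ := A.isCompact.finite_cover_balls (show 0 < ε/8 by positivity)
  set l : List X := htfin.toFinset.toList with hl
  set N : ℕ := l.length with hNdef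
  set x0 : Fin N → X := fun i => l.get i with hx0
  have hmem_l : ∀ x ∈ t, x ∈ l := fun x hx => Finset.mem_toList.2 (htfin.mem_toFinset.2 hx)
  have hx0t : ∀ i, x0 i ∈ t := by
    intro i
    have : l.get i ∈ l := List.get_mem l i
    exact htfin.mem_toFinset.1 (Finset.mem_toList.1 this)
  have hx0A : ∀ i, x0 i ∈ (A : Set X) := fun i => htA (hx0t i)
  have hN : 1 ≤ N := by
    rcases A.nonempty with ⟨a₀, ha₀⟩
    rcases mem_iUnion₂.1 (htcov ha₀) with ⟨x, hxt, _⟩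
    exact List.length_pos_iff.2 (List.ne_nil_of_mem (hmem_l x hxt))
  have hnet : ∀ p ∈ (A : Set X), ∃ i, dist p (x0 i) < ε/8 := by
    intro p hp
    rcases mem_iUnion₂.1 (htcov hp) with ⟨x, hxt, hpx⟩
    rcases List.mem_iff_get.1 (hmem_l x hxt) with ⟨i, hi⟩
    refine ⟨i, ?_⟩
    have hxi : x0 i = x := hi
    rw [hxi]
    exact mem_ball.1 hpx
  have hfib0 : ∀ i j, π (x0 i) = π (x0 j) := by
    intro i j
    have h1 : π (x0 i) = y₀ := hA (hx0A i)
    have h2 : π (x0 j) = y₀ := hA (hx0A j)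
    rw [h1, h2]
  have hc0 : N * 2^0 = N := by simp
  -- the recursive scheme
  obtain ⟨f, hf0, hf⟩ := exists_seq_rec
    (P := fun k (u : (Fin (N * 2^k) → X) × ℝ) => 0 < u.2 ∧ ∀ i j, π (u.1 i) = π (u.1 j))
    (Q := fun k u v => v.2 ≤ u.2 / 2 ∧ (∀ j, dist (v.1 j) (u.1 (hlf j)) ≤ u.2) ∧
        (∀ i, 6 * v.2 < dist (v.1 (dbl0 i)) (v.1 (dbl1 i))))
    ((fun i => x0 (Fin.cast hc0 i), ε/8)) ⟨by positivity, fun i j => hfib0 _ _⟩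
    (fun k u hu => scheme_step T π htrans a b hab hπab N hN k u hu)
  set p : ∀ k, Fin (N * 2^k) → X := fun k => (f k).1 with hp
  set e : ℕ → ℝ := fun k => (f k).2 with he
  have hepos : ∀ k, 0 < e k := fun k => (hf k).1.1
  have hfibk : ∀ k, ∀ i j, π (p k i) = π (p k j) := fun k => (hf k).1.2
  have hmono : ∀ k, e (k+1) ≤ e k / 2 := fun k => (hf k).2.1
  have hdistk : ∀ k j, dist (p (k+1) j) (p k (hlf j)) ≤ e k := fun k => (hf k).2.2.1
  have hsep : ∀ k i, 6 * e (k+1) < dist (p (k+1) (dbl0 i)) (p (k+1) (dbl1 i)) :=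
    fun k => (hf k).2.2.2
  have hp0 : ∀ i, p 0 i = x0 (Fin.cast hc0 i) := by
    intro i; show (f 0).1 i = x0 (Fin.cast hc0 i); rw [hf0]
  have he0 : e 0 = ε/8 := by show (f 0).2 = ε/8; rw [hf0]
  have hebound : ∀ k, e k ≤ (ε/8) * (1/2)^k := by
    intro k
    induction k with
    | zero => rw [he0]; norm_num
    | succ k ih =>
      have := hmono k
      have h2 : (0:ℝ) < (1/2)^k := by positivity
      rw [pow_succ]
      nlinarith
  have hetend : Filter.Tendsto e Filter.atTop (nhds 0) := by
    apply squeeze_zero (fun k => (hepos k).le) hebound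
    have h1 : Filter.Tendsto (fun k : ℕ => ((1:ℝ)/2)^k) Filter.atTop (nhds 0) :=
      tendsto_pow_atTop_nhds_zero_of_lt_one (by norm_num) (by norm_num)
    have := h1.const_mul (ε/8)
    simpa using this
  -- the nested sets
  set D : ℕ → Set X := fun k => ⋃ i, closedBall (p k i) (2 * e k) with hD
  have hDclosed : ∀ k, IsClosed (D k) := fun k =>
    isClosed_iUnion_of_finite fun i => Metric.isClosed_closedBall
  have hDstep : ∀ k, D (k+1) ⊆ D k := by
    intro k q hq
    rcases mem_iUnion.1 hq with ⟨j, hj⟩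
    have h1 : dist q (p (k+1) j) ≤ 2 * e (k+1) := mem_closedBall.1 hj
    have h2 : dist q (p k (hlf j)) ≤ 2 * e k := by
      have := hdistk k j
      have := hmono k
      have := dist_triangle q (p (k+1) j) (p k (hlf j))
      linarith
    exact mem_iUnion.2 ⟨hlf j, mem_closedBall.2 h2⟩
  have hDmono : Antitone D := antitone_nat_of_succ_le hDstep
  set Bset : Set X := ⋂ k, D k with hBdef
  -- branches
  have hbranch : ∀ k (i : Fin (N * 2^k)), ∃ q ∈ Bset, dist q (p k i) ≤ 2 * e k := by
    intro k i
    set desc : ∀ m : ℕ, Fin (N * 2^(k+m)) := fun m => Nat.rec i (fun _ jm => dbl0 jm) m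
      with hdesc
    set C : ℕ → Set X := fun m => closedBall (p (k+m) (desc m)) (2 * e (k+m)) with hC
    have hCne : ∀ m, (C m).Nonempty := fun m =>
      ⟨p (k+m) (desc m), mem_closedBall_self (by linarith [hepos (k+m)])⟩
    have hCstep : ∀ m, C (m+1) ⊆ C m := by
      intro m q hq
      have h1 : dist q (p (k+m+1) (dbl0 (desc m))) ≤ 2 * e (k+m+1) := mem_closedBall.1 hq
      have h2 := hdistk (k+m) (dbl0 (desc m))
      rw [hlf_dbl0] at h2
      have h3 := hmono (k+m)
      have := dist_triangle q (p (k+m+1) (dbl0 (desc m))) (p (k+m) (desc m))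
      exact mem_closedBall.2 (by linarith)
    obtain ⟨q, hq⟩ := IsCompact.nonempty_iInter_of_sequence_nonempty_isCompact_isClosed
      C hCstep hCne Metric.isClosed_closedBall.isCompact (fun m => Metric.isClosed_closedBall)
    have hqC : ∀ m, q ∈ C m := fun m => mem_iInter.1 hq m
    have hqB : q ∈ Bset := by
      rw [hBdef, mem_iInter]
      intro k'
      have h1 : q ∈ D (k + k') := by
        have := hqC k'
        rw [hC] at this
        exact mem_iUnion.2 ⟨desc k', this⟩
      exact hDmono (Nat.le_add_left k' k) h1
    exact ⟨q, hqB, mem_closedBall.1 (hqC 0)⟩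
  have hpos0 : 0 < N * 2^0 := Nat.mul_pos hN (pow_pos (by norm_num) 0)
  have hBne : Bset.Nonempty := by
    obtain ⟨q, hq, _⟩ := hbranch 0 ⟨0, hpos0⟩
    exact ⟨q, hq⟩
  have hnear : ∀ q ∈ Bset, ∀ k, ∃ i, dist q (p k i) ≤ 2 * e k := by
    intro q hq k
    have := mem_iInter.1 hq k
    rcases mem_iUnion.1 this with ⟨i, hi⟩
    exact ⟨i, mem_closedBall.1 hi⟩
  -- B is contained in a single fiber
  have hfibB : ∀ q ∈ Bset, ∀ q' ∈ Bset, π q = π q' := by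
    intro q hq q' hq'
    by_contra hne
    have hd : 0 < dist (π q) (π q') := dist_pos.2 hne
    obtain ⟨γ, hγ, hγ2⟩ := Metric.uniformContinuous_iff.1
      (CompactSpace.uniformContinuous_of_continuous hc) (dist (π q) (π q') / 3)
      (by linarith)
    obtain ⟨k, hk⟩ := ((tendsto_order.1 hetend).2 (γ/2) (by linarith)).exists
    obtain ⟨i, hi⟩ := hnear q hq k
    obtain ⟨i', hi'⟩ := hnear q' hq' k
    have d1 : dist (π q) (π (p k i)) < dist (π q) (π q') / 3 :=
      hγ2 (lt_of_le_of_lt hi (by linarith))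
    have d2 : dist (π q') (π (p k i')) < dist (π q) (π q') / 3 :=
      hγ2 (lt_of_le_of_lt hi' (by linarith))
    have hpk : π (p k i) = π (p k i') := hfibk k i i'
    have := dist_triangle (π q) (π (p k i)) (π q')
    have h5 : dist (π (p k i)) (π q') = dist (π q') (π (p k i')) := by
      rw [hpk, dist_comm]
    linarith
  -- assemble B
  have hBclosed : IsClosed Bset := isClosed_iInter hDclosed
  set B : NonemptyCompacts X := ⟨⟨Bset, hBclosed.isCompact⟩, hBne⟩ with hB
  have hBcoe : (B : Set X) = Bset := rfl
  refine ⟨B, ?_, ?_, ?_⟩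
  · obtain ⟨q₁, hq₁⟩ := hBne
    refine ⟨π q₁, ?_⟩
    rw [hBcoe]
    intro q hq
    exact mem_preimage.2 (mem_singleton_iff.2 (hfibB q hq q₁ hq₁))
  · rw [hBcoe]
    refine ⟨hBclosed, fun x hx => ?_⟩
    rw [accPt_iff_nhds]
    intro U hU
    obtain ⟨r, hr, hball⟩ := Metric.mem_nhds_iff.1 hU
    obtain ⟨k, hk⟩ := ((tendsto_order.1 hetend).2 (r/4) (by positivity)).exists
    obtain ⟨i, hi⟩ := hnear x hx k
    obtain ⟨q₀, hq₀B, hq₀⟩ := hbranch (k+1) (dbl0 i)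
    obtain ⟨q₁, hq₁B, hq₁⟩ := hbranch (k+1) (dbl1 i)
    have hd0 : dist (p (k+1) (dbl0 i)) (p k i) ≤ e k := by
      have := hdistk k (dbl0 i); rwa [hlf_dbl0] at this
    have hd1 : dist (p (k+1) (dbl1 i)) (p k i) ≤ e k := by
      have := hdistk k (dbl1 i); rwa [hlf_dbl1] at this
    have hsep' := hsep k i
    have hq01 : q₀ ≠ q₁ := by
      intro h
      have h4 := dist_triangle4 (p (k+1) (dbl0 i)) q₀ q₁ (p (k+1) (dbl1 i))
      rw [h] at h4
      have e1 : dist (p (k+1) (dbl0 i)) q₁ ≤ 2 * e (k+1) := by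
        rw [dist_comm]; rw [h] at hq₀; exact hq₀
      have e2 : dist q₁ (p (k+1) (dbl1 i)) ≤ 2 * e (k+1) := hq₁
      simp only [dist_self] at h4
      linarith [hepos (k+1)]
    have hmk := hmono k
    have hek := hepos (k+1)
    have hdist0 : dist q₀ x < r := by
      have h4 := dist_triangle4 q₀ (p (k+1) (dbl0 i)) (p k i) x
      rw [dist_comm x (p k i)] at hi
      linarith [hi]
    have hdist1 : dist q₁ x < r := by
      have h4 := dist_triangle4 q₁ (p (k+1) (dbl1 i)) (p k i) x
      rw [dist_comm x (p k i)] at hi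
      linarith [hi]
    by_cases hq0x : q₀ = x
    · refine ⟨q₁, ⟨hball (mem_ball.2 hdist1), hq₁B⟩, ?_⟩
      intro h; rw [h, ← hq0x] at hq01; exact hq01 rfl
    · exact ⟨q₀, ⟨hball (mem_ball.2 hdist0), hq₀B⟩, hq0x⟩
  · rw [hBcoe]
    have hle : Metric.hausdorffDist Bset (A : Set X) ≤ ε/2 := by
      apply Metric.hausdorffDist_le_of_mem_dist (by positivity)
      · intro q hq
        obtain ⟨i, hi⟩ := hnear q hq 0
        refine ⟨x0 (Fin.cast hc0 i), hx0A _, ?_⟩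
        rw [hp0] at hi
        calc dist q (x0 (Fin.cast hc0 i)) ≤ 2 * e 0 := hi
          _ ≤ ε/2 := by rw [he0]; linarith
      · intro q hq
        obtain ⟨i, hi⟩ := hnet q hq
        obtain ⟨w, hwB, hw⟩ := hbranch 0 (Fin.cast hc0.symm i)
        refine ⟨w, hwB, ?_⟩
        rw [hp0] at hw
        have hcc : Fin.cast hc0 (Fin.cast hc0.symm i) = i := rfl
        rw [hcc] at hw
        calc dist q w ≤ dist q (x0 i) + dist (x0 i) w := dist_triangle _ _ _
          _ ≤ ε/8 + 2 * e 0 := by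
              rw [dist_comm (x0 i) w]; linarith
          _ ≤ ε/2 := by rw [he0]; linarith
    linarith

end Core


/-- Let `π : (X, T) → (Y, S)` be a factor map between compact metric dynamical
systems which is not a homeomorphism, and suppose that for every `n ≥ 2` the
system `(R_π^{(n)}, T^{(n)})` is transitive, where
`R_π^{(n)} = {(x₁, …, xₙ) : π x₁ = ⋯ = π xₙ}`. Then the collection of perfect
members of the fiber space `H_π` is a dense Gδ subset of `H_π`. -/
theorem stmt17 {X Y : Type*} [MetricSpace X] [CompactSpace X]
    [MetricSpace Y] [CompactSpace Y]
    (T : X ≃ₜ X) (S : Y ≃ₜ Y) (π : X → Y) (hc : Continuous π)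
    (hs : Function.Surjective π) (hfac : ∀ x, π (T x) = S (π x))
    (hnothomeo : ¬∃ h : X ≃ₜ Y, ⇑h = π)
    (htrans : ∀ n : ℕ, 2 ≤ n →
      ∀ U V : Set (Fin n → X), IsOpen U → IsOpen V →
        (U ∩ {x | ∀ i j, π (x i) = π (x j)}).Nonempty →
        (V ∩ {x | ∀ i j, π (x i) = π (x j)}).Nonempty →
        ∃ m : ℕ, 0 < m ∧
          (U ∩ {x | ∀ i j, π (x i) = π (x j)} ∩
            (fun x : Fin n → X => fun i => T (x i))^[m] ⁻¹' V).Nonempty) :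
    Dense {B : {A : NonemptyCompacts X // ∃ y : Y, (A : Set X) ⊆ π ⁻¹' {y}} |
        Perfect ((B : NonemptyCompacts X) : Set X)} ∧
    IsGδ {B : {A : NonemptyCompacts X // ∃ y : Y, (A : Set X) ⊆ π ⁻¹' {y}} |
        Perfect ((B : NonemptyCompacts X) : Set X)} := by
  have hninj : ¬ Function.Injective π := by
    intro hinj
    exact hnothomeo ⟨Continuous.homeoOfEquivCompactToT2
      (f := Equiv.ofBijective π ⟨hinj, hs⟩) hc, rfl⟩
  obtain ⟨a, b, hπab, hab⟩ := Function.not_injective_iff.1 hninj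
  constructor
  · rw [Metric.dense_iff]
    rintro ⟨A, y₀, hA⟩ r hr
    obtain ⟨B, hBfib, hBperf, hBd⟩ :=
      core_density T π hc htrans a b hab hπab A y₀ hA r hr
    refine ⟨⟨B, hBfib⟩, ?_, hBperf⟩
    rw [mem_ball, Subtype.dist_eq, NonemptyCompacts.dist_eq]
    exact hBd
  · exact (isGδ_perfect_nc (X := X)).preimage' continuous_subtype_val
end

section
/- If (X,T) is a transitive dynamical system admitting an invariant Borel probability measure with full support (an E-system), then every transitive point x is an F_{pubd}-transitive point: for every non-empty open U ⊆ X, the set N(x,U) = {n ∈ ℕ : T^n(x) ∈ U} has positive upper Banach density. -/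
open Classical MeasureTheory

/-- The upper Banach density of a set of natural numbers. -/
noncomputable def upperBanachDensity (F : Set ℕ) : ℝ :=
  Filter.limsup
    (fun N : ℕ => ⨆ M : ℕ, (((Finset.Ico M (M + N)).filter (· ∈ F)).card : ℝ) / N)
    Filter.atTop

/-- If `(X, T)` is a transitive compact metric dynamical system carrying an
invariant Borel probability measure with full support (an E-system), then every
transitive point `x` is an `F_pubd`-transitive point: for every non-empty open
`U ⊆ X` the entering time set `N(x, U) = {n > 0 : T^[n] x ∈ U}` has positive
upper Banach density. -/
theorem stmt18 {X : Type*} [MetricSpace X] [CompactSpace X]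
    [MeasurableSpace X] [BorelSpace X] (T : X ≃ₜ X)
    (htrans : ∀ U V : Set X, IsOpen U → IsOpen V → U.Nonempty → V.Nonempty →
      ∃ n : ℕ, 0 < n ∧ (U ∩ (⇑T)^[n] ⁻¹' V).Nonempty)
    (μ : Measure X) [IsProbabilityMeasure μ]
    (hinv : ∀ s : Set X, MeasurableSet s → μ (⇑T ⁻¹' s) = μ s)
    (hfull : ∀ U : Set X, IsOpen U → U.Nonempty → 0 < μ U)
    (x : X) (hx : Dense (Set.range fun n : ℕ => (⇑T)^[n] x)) :
    ∀ U : Set X, IsOpen U → U.Nonempty →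
      0 < upperBanachDensity {n : ℕ | 0 < n ∧ (⇑T)^[n] x ∈ U} := by
  intro U hU hUne
  set F : Set ℕ := {n : ℕ | 0 < n ∧ (⇑T)^[n] x ∈ U} with hF
  set c : ℝ := (μ U).toReal with hc
  have hμU : 0 < μ U := hfull U hU hUne
  have hcpos : 0 < c := ENNReal.toReal_pos hμU.ne' (measure_ne_top μ U)
  have hAmeas : ∀ n : ℕ, MeasurableSet ((⇑T)^[n] ⁻¹' U) := fun n =>
    (hU.preimage (T.continuous.iterate n)).measurableSet
  have hiter : ∀ n : ℕ, μ ((⇑T)^[n] ⁻¹' U) = μ U := by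
    intro n
    induction n with
    | zero => simp
    | succ n ih =>
      have h1 : (⇑T)^[n+1] ⁻¹' U = ⇑T ⁻¹' ((⇑T)^[n] ⁻¹' U) := by
        rw [Function.iterate_succ]; rfl
      rw [h1, hinv _ (hAmeas n), ih]
  -- Step 1: for every N there is z with many hits in [0, N)
  have exists_good : ∀ N : ℕ, ∃ z : X, (N : ℝ) * c ≤
      (((Finset.range N).filter (fun n => (⇑T)^[n] z ∈ U)).card : ℝ) := by
    intro N
    rcases Nat.eq_zero_or_pos N with hN | hN
    · exact ⟨hUne.some, by simp [hN]⟩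
    by_contra h
    push_neg at h
    have hNc : 0 < (N : ℝ) * c := by positivity
    set k : ℕ := ⌈(N : ℝ) * c⌉₊ - 1 with hk
    have hceil : 1 ≤ ⌈(N : ℝ) * c⌉₊ := Nat.one_le_ceil_iff.mpr hNc
    have hklt : (k : ℝ) < (N : ℝ) * c := by
      have h2 : (⌈(N : ℝ) * c⌉₊ : ℝ) < (N : ℝ) * c + 1 := Nat.ceil_lt_add_one hNc.le
      have h3 : (k : ℝ) = (⌈(N : ℝ) * c⌉₊ : ℝ) - 1 := by
        rw [hk]; push_cast [hceil]; ring
      linarith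
    have hcard : ∀ z : X,
        ((Finset.range N).filter (fun n => (⇑T)^[n] z ∈ U)).card ≤ k := by
      intro z
      have h4 : ((Finset.range N).filter (fun n => (⇑T)^[n] z ∈ U)).card < ⌈(N : ℝ) * c⌉₊ :=
        Nat.lt_ceil.mpr (h z)
      omega
    have key : (N : ENNReal) * μ U ≤ (k : ENNReal) := by
      have h1 : ∑ n ∈ Finset.range N, μ ((⇑T)^[n] ⁻¹' U) = (N : ENNReal) * μ U := by
        simp [hiter, Finset.sum_const, nsmul_eq_mul]
      calc (N : ENNReal) * μ U = ∑ n ∈ Finset.range N, μ ((⇑T)^[n] ⁻¹' U) := h1.symm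
        _ = ∫⁻ z, ∑ n ∈ Finset.range N, ((⇑T)^[n] ⁻¹' U).indicator 1 z ∂μ := by
            rw [MeasureTheory.lintegral_finset_sum _
              (fun n _ => (measurable_one (α := ENNReal)).indicator (hAmeas n))]
            exact Finset.sum_congr rfl fun n _ => (lintegral_indicator_one (hAmeas n)).symm
        _ = ∫⁻ z, ((((Finset.range N).filter (fun n => (⇑T)^[n] z ∈ U)).card : ℕ) : ENNReal) ∂μ := by
            congr 1; funext z
            rw [← Finset.sum_boole]
            exact Finset.sum_congr rfl fun n _ => by
              simp [Set.indicator_apply, Set.mem_preimage]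
        _ ≤ ∫⁻ _, (k : ENNReal) ∂μ := lintegral_mono fun z => by
            exact Nat.mono_cast (hcard z)
        _ = k := by simp
    have key' : (N : ℝ) * c ≤ (k : ℝ) := by
      have := ENNReal.toReal_mono (by simp) key
      rw [ENNReal.toReal_mul] at this
      simpa using this
    linarith
  -- Step 2: for every N there is a window [m, m+N) with many hits of F by the orbit of x
  have window : ∀ N : ℕ, ∃ m : ℕ,
      (N : ℝ) * c - 1 ≤ (((Finset.Ico m (m + N)).filter (· ∈ F)).card : ℝ) := by
    intro N
    obtain ⟨z, hz⟩ := exists_good N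
    set S : Finset ℕ := (Finset.range N).filter (fun n => (⇑T)^[n] z ∈ U) with hS
    have hWopen : IsOpen (⋂ n ∈ S, (⇑T)^[n] ⁻¹' U) :=
      isOpen_biInter_finset fun n _ => hU.preimage (T.continuous.iterate n)
    have hWne : (⋂ n ∈ S, (⇑T)^[n] ⁻¹' U).Nonempty := by
      refine ⟨z, ?_⟩
      simp only [Set.mem_iInter, Set.mem_preimage]
      intro n hn
      exact (Finset.mem_filter.mp hn).2
    obtain ⟨y, ⟨m, rfl⟩, hyW⟩ := hx.exists_mem_open hWopen hWne
    refine ⟨m, ?_⟩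
    have hmem : ∀ s ∈ S.erase 0, m + s ∈ (Finset.Ico m (m + N)).filter (· ∈ F) := by
      intro s hs
      have hs0 : s ≠ 0 := Finset.ne_of_mem_erase hs
      have hsS : s ∈ S := Finset.mem_of_mem_erase hs
      have hsN : s < N := Finset.mem_range.mp (Finset.mem_filter.mp hsS).1
      have hTx : (⇑T)^[m + s] x ∈ U := by
        have h5 : (⇑T)^[m] x ∈ (⇑T)^[s] ⁻¹' U := by
          simp only [Set.mem_iInter] at hyW
          exact hyW s hsS
        have h6 : (⇑T)^[s] ((⇑T)^[m] x) = (⇑T)^[s + m] x :=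
          (Function.iterate_add_apply _ s m x).symm
        rw [Set.mem_preimage, h6] at h5
        rwa [Nat.add_comm m s]
      refine Finset.mem_filter.mpr ⟨Finset.mem_Ico.mpr ⟨Nat.le_add_right m s, by omega⟩, ?_⟩
      exact ⟨by omega, hTx⟩
    have hcard1 : (S.erase 0).card ≤ ((Finset.Ico m (m + N)).filter (· ∈ F)).card :=
      Finset.card_le_card_of_injOn (fun s => m + s) hmem
        (fun a _ b _ hab => by simpa using hab)
    have hcard2 : (S.card : ℝ) - 1 ≤ ((S.erase 0).card : ℝ) := by
      have := Finset.card_erase_le (a := 0) (s := S)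
      have h7 : S.card ≤ (S.erase 0).card + 1 := by
        by_cases h0 : 0 ∈ S
        · rw [Finset.card_erase_of_mem h0]; omega
        · rw [Finset.erase_eq_of_notMem h0]; omega
      have h7' : (S.card : ℝ) ≤ ((S.erase 0).card : ℝ) + 1 := by exact_mod_cast h7
      linarith
    calc (N : ℝ) * c - 1 ≤ (S.card : ℝ) - 1 := by linarith [hz]
      _ ≤ ((S.erase 0).card : ℝ) := hcard2
      _ ≤ _ := by exact_mod_cast hcard1
  -- Step 3: conclude about the limsup
  have hfle : ∀ N : ℕ,
      (⨆ M : ℕ, (((Finset.Ico M (M + N)).filter (· ∈ F)).card : ℝ) / N) ≤ 1 := by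
    intro N
    refine ciSup_le fun M => ?_
    rcases Nat.eq_zero_or_pos N with hN | hN
    · simp [hN]
    have h8 : ((Finset.Ico M (M + N)).filter (· ∈ F)).card ≤ N := by
      calc ((Finset.Ico M (M + N)).filter (· ∈ F)).card ≤ (Finset.Ico M (M + N)).card :=
        Finset.card_filter_le _ _
        _ = N := by simp
    rw [div_le_one (by exact_mod_cast hN)]
    exact_mod_cast h8
  have hbdd : ∀ N : ℕ, BddAbove (Set.range fun M : ℕ =>
      (((Finset.Ico M (M + N)).filter (· ∈ F)).card : ℝ) / N) := by
    intro N
    refine ⟨N, ?_⟩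
    rintro r ⟨M, rfl⟩
    rcases Nat.eq_zero_or_pos N with hN | hN
    · simp [hN]
    rw [div_le_iff₀ (by exact_mod_cast hN)]
    have h8 : ((Finset.Ico M (M + N)).filter (· ∈ F)).card ≤ N * N := by
      calc ((Finset.Ico M (M + N)).filter (· ∈ F)).card ≤ (Finset.Ico M (M + N)).card :=
        Finset.card_filter_le _ _
        _ = N := by simp
        _ ≤ N * N := Nat.le_mul_of_pos_left N hN
    exact_mod_cast h8
  have hflb : ∀ N : ℕ, 0 < N → c - 1 / N ≤
      ⨆ M : ℕ, (((Finset.Ico M (M + N)).filter (· ∈ F)).card : ℝ) / N := by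
    intro N hN
    obtain ⟨m, hm⟩ := window N
    have h9 : c - 1 / N ≤ (((Finset.Ico m (m + N)).filter (· ∈ F)).card : ℝ) / N := by
      rw [sub_le_iff_le_add, ← add_div, le_div_iff₀ (by exact_mod_cast hN)]
      have : (N : ℝ) * c - 1 + 1 = N * c := by ring
      nlinarith [hm]
    exact h9.trans (le_ciSup (hbdd N) m)
  have hUB : upperBanachDensity F = Filter.limsup
      (fun N : ℕ => ⨆ M : ℕ, (((Finset.Ico M (M + N)).filter (· ∈ F)).card : ℝ) / N)
      Filter.atTop := by
    rw [upperBanachDensity]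
    congr!
  have hlim : c / 2 ≤ upperBanachDensity F := by
    rw [hUB]
    refine Filter.le_limsup_of_frequently_le ?_ (Filter.isBoundedUnder_of
      ⟨1, fun N => hfle N⟩)
    refine Filter.Eventually.frequently ?_
    obtain ⟨N₀, hN₀⟩ := exists_nat_gt (2 / c)
    filter_upwards [Filter.eventually_ge_atTop (N₀ + 1)] with N hNge
    have hNpos : 0 < N := by omega
    have hNlarge : 2 / c < (N : ℝ) := lt_of_lt_of_le hN₀ (by exact_mod_cast (by omega : N₀ ≤ N))
    have h10 : 1 / (N : ℝ) ≤ c / 2 := by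
      rw [div_le_div_iff₀ (by exact_mod_cast hNpos) (by norm_num)]
      rw [div_lt_iff₀ hcpos] at hNlarge
      nlinarith
    have h11 := hflb N hNpos
    linarith
  calc (0 : ℝ) < c / 2 := by linarith
    _ ≤ _ := hlim
end

section
/- If (X,T) is a transitive dynamical system in which the set of minimal points is dense (an M-system), then every transitive point x is an F_{ps}-transitive point: for every non-empty open U ⊆ X, the set N(x,U) = {n ∈ ℕ : T^n(x) ∈ U} is piecewise syndetic. -/
/-- Combinatorial core: if there is a single gap bound `N` such that `S` has
gaps at most `N` along arbitrarily long blocks, then `S` is the intersection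
of a thick set and a syndetic set. -/
lemma pws_of_blocks {S : Set ℕ} {N : ℕ}
    (h : ∀ L : ℕ, ∃ k : ℕ, ∀ i ≤ L, ∃ j, k + i ≤ j ∧ j ≤ k + i + N ∧ j ∈ S) :
    ∃ A B : Set ℕ, Thick A ∧ Syndetic B ∧ S = A ∩ B := by
  set C : Set ℕ := {m | ∀ j, j ≤ m → m ≤ j + N → j ∉ S} with hC
  refine ⟨S ∪ Cᶜ, S ∪ C, ?_, ⟨N, ?_⟩, ?_⟩
  · intro L
    obtain ⟨k, hk⟩ := h L
    refine ⟨k + N, fun i hi => ?_⟩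
    obtain ⟨j, hj1, hj2, hjS⟩ := hk i hi
    by_cases hS : k + N + i ∈ S
    · exact Or.inl hS
    · refine Or.inr (fun hCmem => ?_)
      exact hCmem j (by omega) (by omega) hjS
  · intro i
    by_cases hS : ∃ j, i ≤ j ∧ j ≤ i + N ∧ j ∈ S
    · obtain ⟨j, h1, h2, h3⟩ := hS
      exact ⟨j, h1, h2, Or.inl h3⟩
    · push_neg at hS
      exact ⟨i + N, by omega, le_refl _,
        Or.inr (fun j hj1 hj2 => hS j (by omega) (by omega))⟩
  · ext n
    simp only [Set.mem_inter_iff, Set.mem_union, Set.mem_compl_iff]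
    tauto

/-- If `(X, T)` is a transitive compact metric dynamical system in which the
set of minimal points is dense (an M-system), then every transitive point `x`
is an `F_ps`-transitive point: for every non-empty open `U ⊆ X` the entering
time set `N(x, U) = {n > 0 : T^[n] x ∈ U}` is piecewise syndetic, i.e. the
intersection of a thick set and a syndetic set. -/
theorem stmt19 {X : Type*} [MetricSpace X] [CompactSpace X] (T : X ≃ₜ X)
    (htrans : ∀ U V : Set X, IsOpen U → IsOpen V → U.Nonempty → V.Nonempty →
      ∃ n : ℕ, 0 < n ∧ (U ∩ (⇑T)^[n] ⁻¹' V).Nonempty)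
    (hmin : Dense {z : X |
      ∀ y ∈ closure (Set.range fun n : ℕ => (⇑T)^[n] z),
        closure (Set.range fun n : ℕ => (⇑T)^[n] z) ⊆
          closure (Set.range fun n : ℕ => (⇑T)^[n] y)})
    (x : X) (hx : Dense (Set.range fun n : ℕ => (⇑T)^[n] x)) :
    ∀ U : Set X, IsOpen U → U.Nonempty →
      ∃ A B : Set ℕ, Thick A ∧ Syndetic B ∧
        {n : ℕ | 0 < n ∧ (⇑T)^[n] x ∈ U} = A ∩ B := by
  intro U hU hUne
  -- pick a minimal point z in U
  obtain ⟨z, hzmin, hzU⟩ := hmin.exists_mem_open hU hUne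
  set M := closure (Set.range fun n : ℕ => (⇑T)^[n] z) with hMdef
  have horbM : ∀ n : ℕ, (⇑T)^[n] z ∈ M := fun n => subset_closure ⟨n, rfl⟩
  have hiterCont : ∀ n : ℕ, Continuous ((⇑T)^[n]) := fun n => T.continuous.iterate n
  -- every point of M visits U
  have hcover : M ⊆ ⋃ n : ℕ, (⇑T)^[n] ⁻¹' U := by
    intro y hy
    have hz : z ∈ closure (Set.range fun n : ℕ => (⇑T)^[n] y) := hzmin y hy (horbM 0)
    obtain ⟨w, hwU, hws⟩ := _root_.mem_closure_iff.mp hz U hU hzU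
    obtain ⟨n, rfl⟩ := hws
    exact Set.mem_iUnion.mpr ⟨n, hwU⟩
  -- compactness: uniform bound N on return time to U from M
  have hMc : IsCompact M := isClosed_closure.isCompact
  obtain ⟨t, ht⟩ := hMc.elim_finite_subcover (fun n : ℕ => (⇑T)^[n] ⁻¹' U)
    (fun n => hU.preimage (hiterCont n)) hcover
  set N := t.sup id with hNdef
  set W : Set X := ⋃ n ∈ Finset.range (N + 1), (⇑T)^[n] ⁻¹' U with hWdef
  have hWopen : IsOpen W := isOpen_biUnion (fun n _ => hU.preimage (hiterCont n))
  have hMW : M ⊆ W := by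
    intro y hy
    obtain ⟨n, hnt, hyn⟩ := Set.mem_iUnion₂.mp (ht hy)
    exact Set.mem_biUnion (Finset.mem_range.mpr (Nat.lt_succ_of_le (Finset.le_sup (f := id) hnt))) hyn
  have hWret : ∀ y ∈ W, ∃ n ≤ N, (⇑T)^[n] y ∈ U := by
    intro y hy
    obtain ⟨n, hn, hyn⟩ := Set.mem_iUnion₂.mp hy
    exact ⟨n, Nat.lt_succ_iff.mp (Finset.mem_range.mp hn), hyn⟩
  -- key block property
  have key : ∀ L : ℕ, ∃ k : ℕ, ∀ i ≤ L, ∃ j, k + i ≤ j ∧ j ≤ k + i + N ∧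
      j ∈ {n : ℕ | 0 < n ∧ (⇑T)^[n] x ∈ U} := by
    intro L
    set V : Set X := ⋂ i ∈ Finset.range (L + 1), (⇑T)^[i] ⁻¹' W with hVdef
    have hVopen : IsOpen V := isOpen_biInter_finset (fun i _ => hWopen.preimage (hiterCont i))
    have hzV : z ∈ V := Set.mem_iInter₂.mpr (fun i _ => hMW (horbM i))
    have hpre : IsOpen ((⇑T) ⁻¹' V) := hVopen.preimage T.continuous
    have hprene : ((⇑T) ⁻¹' V).Nonempty := ⟨T.symm z, by simp [hzV]⟩
    obtain ⟨w, hws, hwV⟩ := hx.exists_mem_open hpre hprene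
    obtain ⟨k, rfl⟩ := hws
    have hk1 : (⇑T)^[k + 1] x ∈ V := by
      rw [Function.iterate_succ_apply']
      exact hwV
    refine ⟨k + 1, fun i hi => ?_⟩
    have hiW : (⇑T)^[i + (k + 1)] x ∈ W := by
      rw [Function.iterate_add_apply]
      exact Set.mem_iInter₂.mp hk1 i (Finset.mem_range.mpr (Nat.lt_succ_of_le hi))
    obtain ⟨n, hnN, hnU⟩ := hWret _ hiW
    refine ⟨n + (i + (k + 1)), by omega, by omega, by omega, ?_⟩
    rw [Function.iterate_add_apply]
    exact hnU
  exact pws_of_blocks key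
end
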